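/- arXiv:1702.00622 — 7 statements merged into one kernel-verified Lean document; each statement's English description precedes it below -/
import Mathlib

section
/- Let G be a (2K2, HVN)-free graph. Then χ(G) ≤ ω(G) + 3. -/
open SimpleGraph

/-- `G` contains no induced subgraph isomorphic to `H` (graph embeddings are
exactly the inclusions of induced subgraphs). -/
def IndFree {W V : Type*} (H : SimpleGraph W) (G : SimpleGraph V) : Prop :=
  IsEmpty (H ↪g G)

/-- A set of vertices is independent if its elements are pairwise nonadjacent. -/
def IsIndep {V : Type*} (G : SimpleGraph V) (s : Set V) : Prop :=
  s.Pairwise fun u v => ¬ G.Adj u v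

/-- A graph is perfect if every induced subgraph has chromatic number equal to
its clique number. -/
def IsPerfect {V : Type*} (G : SimpleGraph V) : Prop :=
  ∀ S : Set V, (G.induce S).chromaticNumber = ((G.induce S).cliqueNum : ℕ∞)

/-- `2K₂`: two disjoint edges `{0,1}` and `{2,3}`. -/
def graph2K2 : SimpleGraph (Fin 4) :=
  SimpleGraph.fromRel (fun a b => (a = 0 ∧ b = 1) ∨ (a = 2 ∧ b = 3))

/-- The path `P₄`. -/
def graphP4 : SimpleGraph (Fin 4) :=
  SimpleGraph.fromRel (fun a b => (a = 0 ∧ b = 1) ∨ (a = 1 ∧ b = 2) ∨ (a = 2 ∧ b = 3))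

/-- The path `P₃`. -/
def graphP3 : SimpleGraph (Fin 3) :=
  SimpleGraph.fromRel (fun a b => (a = 0 ∧ b = 1) ∨ (a = 1 ∧ b = 2))

/-- `P₄ ∪ K₁`: a path on `{0,1,2,3}` plus the isolated vertex `4`. -/
def graphP4K1 : SimpleGraph (Fin 5) :=
  SimpleGraph.fromRel (fun a b => (a = 0 ∧ b = 1) ∨ (a = 1 ∧ b = 2) ∨ (a = 2 ∧ b = 3))

/-- The cycle `C₄`. -/
def graphC4 : SimpleGraph (Fin 4) :=
  SimpleGraph.fromRel
    (fun a b => (a = 0 ∧ b = 1) ∨ (a = 1 ∧ b = 2) ∨ (a = 2 ∧ b = 3) ∨ (a = 3 ∧ b = 0))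

/-- The gem `K₁ + P₄`: a path on `{0,1,2,3}` plus the universal vertex `4`. -/
def graphGem : SimpleGraph (Fin 5) :=
  SimpleGraph.fromRel
    (fun a b => (a = 0 ∧ b = 1) ∨ (a = 1 ∧ b = 2) ∨ (a = 2 ∧ b = 3) ∨ (a ≠ 4 ∧ b = 4))

/-- The wheel `K₁ + C₄`: a 4-cycle on `{0,1,2,3}` plus the universal vertex `4`. -/
def graphWheel : SimpleGraph (Fin 5) :=
  SimpleGraph.fromRel
    (fun a b => (a = 0 ∧ b = 1) ∨ (a = 1 ∧ b = 2) ∨ (a = 2 ∧ b = 3) ∨ (a = 3 ∧ b = 0) ∨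
      (a ≠ 4 ∧ b = 4))

/-- `P₂ ∪ P₃`: the edge `{0,1}` together with the path `2 - 3 - 4`. -/
def graphP2P3 : SimpleGraph (Fin 5) :=
  SimpleGraph.fromRel (fun a b => (a = 0 ∧ b = 1) ∨ (a = 2 ∧ b = 3) ∨ (a = 3 ∧ b = 4))

/-- `P₂ ∪ P₄`: the edge `{0,1}` together with the path `2 - 3 - 4 - 5`. -/
def graphP2P4 : SimpleGraph (Fin 6) :=
  SimpleGraph.fromRel
    (fun a b => (a = 0 ∧ b = 1) ∨ (a = 2 ∧ b = 3) ∨ (a = 3 ∧ b = 4) ∨ (a = 4 ∧ b = 5))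

/-- `HVN`: `K₄` on `{0,1,2,3}` plus a vertex `4` adjacent to exactly `0` and `1`. -/
def graphHVN : SimpleGraph (Fin 5) :=
  SimpleGraph.fromRel (fun a b => (a < 4 ∧ b < 4) ∨ (a = 4 ∧ (b = 0 ∨ b = 1)))

/-- `K₅ - e`: the complete graph on 5 vertices minus the edge `{0,1}`. -/
def graphK5e : SimpleGraph (Fin 5) :=
  SimpleGraph.fromRel (fun a b => ¬((a = 0 ∧ b = 1) ∨ (a = 1 ∧ b = 0)))

/-- The diamond `K₄ - e`: the complete graph on 4 vertices minus the edge `{0,2}`. -/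
def graphDiamond : SimpleGraph (Fin 4) :=
  SimpleGraph.fromRel (fun a b => ¬((a = 0 ∧ b = 2) ∨ (a = 2 ∧ b = 0)))

/-- The paw: a triangle `{0,1,2}` plus a pendant vertex `3` adjacent to `0`. -/
def graphPaw : SimpleGraph (Fin 4) :=
  SimpleGraph.fromRel
    (fun a b => (a = 0 ∧ b = 1) ∨ (a = 1 ∧ b = 2) ∨ (a = 0 ∧ b = 2) ∨ (a = 0 ∧ b = 3))

/-- `K₅`. -/
def graphK5 : SimpleGraph (Fin 5) := ⊤

/-- The join `K₁ + H`: `H` together with a new universal vertex `none`. -/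
def joinK1 {W : Type*} (H : SimpleGraph W) : SimpleGraph (Option W) :=
  SimpleGraph.fromRel
    (fun a b => (∃ u v, a = some u ∧ b = some v ∧ H.Adj u v) ∨ a = none)

/-- A pseudo-split graph is a `(2K₂, C₄)`-free graph. -/
def IsPseudoSplit {V : Type*} (G : SimpleGraph V) : Prop :=
  IndFree graph2K2 G ∧ IndFree graphC4 G


section StmtSevenHelpers

open Finset

lemma no2K2' {V : Type*} {G : SimpleGraph V} (h1 : IndFree graph2K2 G)
    {u v x y : V} (huv : G.Adj u v) (hxy : G.Adj x y)
    (hux : ¬G.Adj u x) (huy : ¬G.Adj u y) (hvx : ¬G.Adj v x) (hvy : ¬G.Adj v y) : False := by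
  have h02 : u ≠ x := by rintro rfl; exact huy hxy
  have h03 : u ≠ y := by rintro rfl; exact hux hxy.symm
  have h12 : v ≠ x := by rintro rfl; exact hvy hxy
  have h13 : v ≠ y := by rintro rfl; exact hvx hxy.symm
  have h01 : u ≠ v := huv.ne
  have h23 : x ≠ y := hxy.ne
  refine h1.false ⟨⟨![u,v,x,y], ?_⟩, ?_⟩
  · intro a b hab
    fin_cases a <;> fin_cases b <;> simp_all
  · intro a b
    fin_cases a <;> fin_cases b <;>
      simp [graph2K2, Matrix.cons_val_zero, Matrix.cons_val_one] <;>
      first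
        | exact fun h => (G.loopless _ h)
        | tauto

lemma noHVN' {V : Type*} {G : SimpleGraph V} (h2 : IndFree graphHVN G)
    {a b c d v : V} (hab : G.Adj a b) (hac : G.Adj a c) (had : G.Adj a d)
    (hbc : G.Adj b c) (hbd : G.Adj b d) (hcd : G.Adj c d)
    (hva : G.Adj v a) (hvb : G.Adj v b) (hvc : ¬G.Adj v c) (hvd : ¬G.Adj v d) : False := by
  have h40 : v ≠ a := (G.ne_of_adj hva)
  have h41 : v ≠ b := (G.ne_of_adj hvb)
  have h42 : v ≠ c := by rintro rfl; exact hvd hcd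
  have h43 : v ≠ d := by rintro rfl; exact hvc hcd.symm
  have h01 := hab.ne; have h02 := hac.ne; have h03 := had.ne
  have h12 := hbc.ne; have h13 := hbd.ne; have h23 := hcd.ne
  refine h2.false ⟨⟨![a,b,c,d,v], ?_⟩, ?_⟩
  · intro i j hij
    fin_cases i <;> fin_cases j <;> simp_all
  · intro i j
    fin_cases i <;> fin_cases j <;>
      simp [graphHVN, Matrix.cons_val_zero, Matrix.cons_val_one] <;>
      first
        | exact fun h => (G.loopless _ h)
        | tauto

variable {V : Type*} [Fintype V] {G : SimpleGraph V}

lemma cliqueCard_le' (s : Finset V) (h : G.IsClique s) : s.card ≤ G.cliqueNum :=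
  SimpleGraph.IsClique.card_le_cliqueNum (tc := h)

lemma two_le_cn' (huv : G.Adj u v) : 2 ≤ G.cliqueNum := by
  classical
  have h : G.IsClique ({u, v} : Finset V) := by
    intro a ha b hb hne
    simp only [coe_insert, Set.mem_insert_iff, coe_singleton, Set.mem_singleton_iff] at ha hb
    rcases ha with rfl|rfl <;> rcases hb with rfl|rfl <;>
      first | exact absurd rfl hne | assumption | (apply SimpleGraph.Adj.symm ; assumption)
  have := cliqueCard_le' _ h
  rwa [card_insert_of_notMem (by simp [huv.ne]), card_singleton] at this

lemma three_le_cn' (huv : G.Adj u v) (huw : G.Adj u w) (hvw : G.Adj v w) :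
    3 ≤ G.cliqueNum := by
  classical
  have h : G.IsClique ({u, v, w} : Finset V) := by
    intro a ha b hb hne
    simp only [coe_insert, Set.mem_insert_iff, coe_singleton, Set.mem_singleton_iff] at ha hb
    rcases ha with rfl|rfl|rfl <;> rcases hb with rfl|rfl|rfl <;>
      first | exact absurd rfl hne | assumption | (apply SimpleGraph.Adj.symm ; assumption)
  have := cliqueCard_le' _ h
  have hc : ({u, v, w} : Finset V).card = 3 := by
    rw [card_insert_of_notMem (by simp [huv.ne, huw.ne]),
      card_insert_of_notMem (by simp [hvw.ne]), card_singleton]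
  omega

lemma four_le_cn' (huv : G.Adj u v) (huw : G.Adj u w) (hux : G.Adj u x)
    (hvw : G.Adj v w) (hvx : G.Adj v x) (hwx : G.Adj w x) : 4 ≤ G.cliqueNum := by
  classical
  have h : G.IsClique ({u, v, w, x} : Finset V) := by
    intro a ha b hb hne
    simp only [coe_insert, Set.mem_insert_iff, coe_singleton, Set.mem_singleton_iff] at ha hb
    rcases ha with rfl|rfl|rfl|rfl <;> rcases hb with rfl|rfl|rfl|rfl <;>
      first | exact absurd rfl hne | assumption | (apply SimpleGraph.Adj.symm ; assumption)
  have := cliqueCard_le' _ h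
  have hc : ({u, v, w, x} : Finset V).card = 4 := by
    rw [card_insert_of_notMem (by simp [huv.ne, huw.ne, hux.ne]),
      card_insert_of_notMem (by simp [hvw.ne, hvx.ne]),
      card_insert_of_notMem (by simp [hwx.ne]), card_singleton]
  omega

lemma stmt7CaseBig (h1 : IndFree graph2K2 G) (h2 : IndFree graphHVN G)
    (K : Finset V) (hcl : G.IsClique K) (hcard : K.card = G.cliqueNum)
    (h4 : 4 ≤ G.cliqueNum) : G.Colorable (G.cliqueNum + 1) := by
  classical
  set ω := G.cliqueNum with hω
  have key : ∀ v, v ∉ K → ¬ (∃ x, ∃ _ : x ∈ K, ¬G.Adj v x ∧ ∀ y ∈ K, y ≠ x → G.Adj v y) →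
      ω - 1 ≤ (K.filter (fun y => ¬ G.Adj v y)).card := by
    intro v hvK hnp
    set M := K.filter (fun y => ¬ G.Adj v y) with hM
    set N := K.filter (fun y => G.Adj v y) with hN
    have hNM : N.card + M.card = ω := by
      rw [hN, hM, card_filter_add_card_filter_not, hcard]
    by_contra hcon
    push_neg at hcon
    have hN2 : 2 ≤ N.card := by omega
    rcases Nat.lt_or_ge M.card 2 with hMlt | hM2
    · interval_cases hMc : M.card
      · have hall : ∀ y ∈ K, G.Adj v y := by
          intro y hy
          by_contra hne
          have : y ∈ M := by rw [hM]; exact mem_filter.mpr ⟨hy, hne⟩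
          simp [card_eq_zero.mp hMc] at this
        have hclq : G.IsClique (insert v K : Finset V) := by
          intro p hp q hq hpq
          simp only [coe_insert, Set.mem_insert_iff, mem_coe] at hp hq
          rcases hp with rfl | hp <;> rcases hq with rfl | hq
          · exact absurd rfl hpq
          · exact hall q hq
          · exact (hall p hp).symm
          · exact hcl hp hq hpq
        have := cliqueCard_le' _ hclq
        rw [card_insert_of_notMem hvK, hcard] at this
        omega
      · obtain ⟨x, hx⟩ := card_eq_one.mp hMc
        have hxK : x ∈ K ∧ ¬ G.Adj v x := by
          have : x ∈ M := by rw [hx]; exact mem_singleton_self x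
          exact mem_filter.mp this
        refine hnp ⟨x, hxK.1, hxK.2, fun y hy hyx => ?_⟩
        by_contra hne
        have : y ∈ M := mem_filter.mpr ⟨hy, hne⟩
        rw [hx, mem_singleton] at this
        exact hyx this
    · obtain ⟨a, ha, b, hb, hab⟩ := one_lt_card.mp hN2
      obtain ⟨c, hc, d, hd, hcd⟩ := one_lt_card.mp hM2
      have haK := (mem_filter.mp ha).1; have hva := (mem_filter.mp ha).2
      have hbK := (mem_filter.mp hb).1; have hvb := (mem_filter.mp hb).2
      have hcK := (mem_filter.mp hc).1; have hvc := (mem_filter.mp hc).2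
      have hdK := (mem_filter.mp hd).1; have hvd := (mem_filter.mp hd).2
      have hac : a ≠ c := fun h => hvc (h ▸ hva)
      have had : a ≠ d := fun h => hvd (h ▸ hva)
      have hbc : b ≠ c := fun h => hvc (h ▸ hvb)
      have hbd : b ≠ d := fun h => hvd (h ▸ hvb)
      exact noHVN' h2 (hcl haK hbK hab) (hcl haK hcK hac) (hcl haK hdK had)
        (hcl hbK hcK hbc) (hcl hbK hdK hbd) (hcl hcK hdK hcd) hva hvb hvc hvd
  let f : V → Option {x // x ∈ K} := fun v =>
    if hv : v ∈ K then some ⟨v, hv⟩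
    else if h : ∃ x, ∃ _ : x ∈ K, ¬G.Adj v x ∧ ∀ y ∈ K, y ≠ x → G.Adj v y
      then some ⟨h.choose, h.choose_spec.choose⟩
      else none
  have valid : ∀ {v w : V}, G.Adj v w → f v ≠ f w := by
    intro v w hadj heq
    by_cases hv : v ∈ K <;> by_cases hw : w ∈ K
    · simp only [f, dif_pos hv, dif_pos hw, Option.some.injEq, Subtype.mk.injEq] at heq
      exact hadj.ne heq
    · simp only [f, dif_pos hv, dif_neg hw] at heq
      split_ifs at heq with h
      · simp only [Option.some.injEq, Subtype.mk.injEq] at heq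
        obtain ⟨hxK, hnadj, hall⟩ := h.choose_spec
        rw [← heq] at hnadj
        exact hnadj hadj.symm
    · simp only [f, dif_neg hv, dif_pos hw] at heq
      split_ifs at heq with h
      · simp only [Option.some.injEq, Subtype.mk.injEq] at heq
        obtain ⟨hxK, hnadj, hall⟩ := h.choose_spec
        rw [heq] at hnadj
        exact hnadj hadj
    · simp only [f, dif_neg hv, dif_neg hw] at heq
      split_ifs at heq with hp hq hq
      · simp only [Option.some.injEq, Subtype.mk.injEq] at heq
        obtain ⟨hxK, hnav, hallv⟩ := hp.choose_spec
        obtain ⟨hyK, hnaw, hallw⟩ := hq.choose_spec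
        set x := hp.choose
        rw [← heq] at hallw
        have hclq : G.IsClique (insert v (insert w (K.erase x)) : Finset V) := by
          intro p hp' q hq' hpq
          simp only [coe_insert, Set.mem_insert_iff, mem_coe, mem_erase] at hp' hq'
          rcases hp' with rfl | rfl | ⟨hpx, hpK⟩ <;> rcases hq' with rfl | rfl | ⟨hqx, hqK⟩
          · exact absurd rfl hpq
          · exact hadj
          · exact hallv q hqK hqx
          · exact hadj.symm
          · exact absurd rfl hpq
          · exact hallw q hqK hqx
          · exact (hallv p hpK hpx).symm
          · exact (hallw p hpK hpx).symm
          · exact hcl hpK hqK hpq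
        have hle := cliqueCard_le' _ hclq
        have hwx : w ∉ K.erase x := fun h => hw (mem_of_mem_erase h)
        have hvx : v ∉ insert w (K.erase x) := by
          simp only [mem_insert, mem_erase]
          push_neg
          exact ⟨hadj.ne, fun _ => hv ∘ fun h => h⟩
        rw [card_insert_of_notMem hvx, card_insert_of_notMem hwx,
          card_erase_of_mem hxK, hcard] at hle
        omega
      · have hkv := key v hv hp
        have hkw := key w hw hq
        set Mv := K.filter (fun y => ¬ G.Adj v y)
        set Mw := K.filter (fun y => ¬ G.Adj w y)
        have hsub : Mv ∪ Mw ⊆ K := union_subset (filter_subset _ _) (filter_subset _ _)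
        have hint : 2 ≤ (Mv ∩ Mw).card := by
          have h1' := card_inter_add_card_union Mv Mw
          have h2' := card_le_card hsub
          rw [hcard] at h2'
          omega
        obtain ⟨x, hx, y, hy, hxy⟩ := one_lt_card.mp hint
        simp only [mem_inter, Mv, Mw, mem_filter] at hx hy
        exact no2K2' h1 hadj (hcl hx.1.1 hy.1.1 hxy) hx.1.2 hy.1.2 hx.2.2 hy.2.2
  have C : G.Coloring (Option {x // x ∈ K}) := Coloring.mk f valid
  have := C.colorable
  rwa [Fintype.card_option, Fintype.card_coe, hcard] at this

lemma stmt7CaseSmall (hle : G.cliqueNum ≤ 1) : G.Colorable 1 := by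
  classical
  have C : G.Coloring (Fin 1) := Coloring.mk (fun _ => 0) (by
    intro v w hadj heq
    have := two_le_cn' hadj
    omega)
  simpa using C.colorable

lemma stmt7Case2 (h1 : IndFree graph2K2 G) (K : Finset V) (hcl : G.IsClique K)
    (hcard : K.card = G.cliqueNum) (hc2 : G.cliqueNum = 2) : G.Colorable 3 := by
  classical
  obtain ⟨a, b, hne, rfl⟩ := card_eq_two.mp (hcard.trans hc2)
  have hab : G.Adj a b := hcl (by simp) (by simp) hne
  let f : V → Fin 3 := fun v =>
    if G.Adj v b then 0 else if G.Adj v a then 1 else 2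
  have C : G.Coloring (Fin 3) := Coloring.mk f (by
    intro v w hadj heq
    by_cases hvb : G.Adj v b <;> by_cases hwb : G.Adj w b
    · have := three_le_cn' hadj hvb hwb; omega
    · simp only [f, if_pos hvb, if_neg hwb] at heq
      split at heq <;> exact absurd heq (by decide)
    · simp only [f, if_neg hvb, if_pos hwb] at heq
      split at heq <;> exact absurd heq (by decide)
    · by_cases hva : G.Adj v a <;> by_cases hwa : G.Adj w a
      · have := three_le_cn' hadj hva hwa; omega
      · simp only [f, if_neg hvb, if_neg hwb, if_pos hva, if_neg hwa] at heq
        exact absurd heq (by decide)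
      · simp only [f, if_neg hvb, if_neg hwb, if_neg hva, if_pos hwa] at heq
        exact absurd heq (by decide)
      · exact no2K2' h1 hadj hab hva hvb hwa hwb)
  simpa using C.colorable

lemma stmt7Case3 (h1 : IndFree graph2K2 G) (K : Finset V) (hcl : G.IsClique K)
    (hcard : K.card = G.cliqueNum) (hc3 : G.cliqueNum = 3) : G.Colorable 6 := by
  classical
  obtain ⟨a, b, c, hab', hac', hbc', rfl⟩ := card_eq_three.mp (hcard.trans hc3)
  have hab : G.Adj a b := hcl (by simp) (by simp) hab'
  have hac : G.Adj a c := hcl (by simp) (by simp) hac'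
  have hbc : G.Adj b c := hcl (by simp) (by simp) hbc'
  let f : V → Fin 6 := fun v =>
    if v = a then 0 else if v = b then 1 else if v = c then 2
    else if G.Adj v b ∧ G.Adj v c then 0
    else if G.Adj v a ∧ G.Adj v c then 1
    else if G.Adj v a ∧ G.Adj v b then 2
    else if ¬G.Adj v b ∧ ¬G.Adj v c then 3
    else if G.Adj v b then 4 else 5
  have hchar : ∀ v : V,
      (f v = 0 → v = a ∨ (G.Adj v b ∧ G.Adj v c)) ∧
      (f v = 1 → v = b ∨ (G.Adj v a ∧ G.Adj v c)) ∧
      (f v = 2 → v = c ∨ (G.Adj v a ∧ G.Adj v b)) ∧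
      (f v = 3 → ¬G.Adj v b ∧ ¬G.Adj v c) ∧
      (f v = 4 → ¬G.Adj v a ∧ ¬G.Adj v c) ∧
      (f v = 5 → ¬G.Adj v a ∧ ¬G.Adj v b) := by
    intro v
    simp only [f]
    split_ifs with g1 g2 g3 g4 g5 g6 g7 g8 <;>
      refine ⟨?_, ?_, ?_, ?_, ?_, ?_⟩ <;> intro hk <;>
      first
        | exact absurd hk (by decide)
        | tauto
  have valid : ∀ {v w : V}, G.Adj v w → f v ≠ f w := by
    intro v w hadj heq
    have hv := hchar v
    have hw := hchar w
    have h6 : ∀ i : Fin 6, i = 0 ∨ i = 1 ∨ i = 2 ∨ i = 3 ∨ i = 4 ∨ i = 5 := by decide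
    have hwa : G.Adj w a → G.Adj w b → G.Adj w c → False := fun x y z => by
      have := four_le_cn' x y z hab hac hbc; omega
    have hva : G.Adj v a → G.Adj v b → G.Adj v c → False := fun x y z => by
      have := four_le_cn' x y z hab hac hbc; omega
    rcases h6 (f v) with h | h | h | h | h | h
    · rcases hv.1 h with rfl | ⟨h1', h2'⟩ <;> rcases hw.1 (heq ▸ h) with rfl | ⟨h3', h4'⟩
      · exact hadj.ne rfl
      · exact hwa hadj.symm h3' h4'
      · exact hva hadj h1' h2'
      · have := four_le_cn' hadj h1' h2' h3' h4' hbc; omega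
    · rcases hv.2.1 h with rfl | ⟨h1', h2'⟩ <;> rcases hw.2.1 (heq ▸ h) with rfl | ⟨h3', h4'⟩
      · exact hadj.ne rfl
      · exact hwa h3' hadj.symm h4'
      · exact hva h1' hadj h2'
      · have := four_le_cn' hadj h1' h2' h3' h4' hac; omega
    · rcases hv.2.2.1 h with rfl | ⟨h1', h2'⟩ <;> rcases hw.2.2.1 (heq ▸ h) with rfl | ⟨h3', h4'⟩
      · exact hadj.ne rfl
      · exact hwa h3' h4' hadj.symm
      · exact hva h1' h2' hadj
      · have := four_le_cn' hadj h1' h2' h3' h4' hab; omega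
    · obtain ⟨h1', h2'⟩ := hv.2.2.2.1 h
      obtain ⟨h3', h4'⟩ := hw.2.2.2.1 (heq ▸ h)
      exact no2K2' h1 hadj hbc h1' h2' h3' h4'
    · obtain ⟨h1', h2'⟩ := hv.2.2.2.2.1 h
      obtain ⟨h3', h4'⟩ := hw.2.2.2.2.1 (heq ▸ h)
      exact no2K2' h1 hadj hac h1' h2' h3' h4'
    · obtain ⟨h1', h2'⟩ := hv.2.2.2.2.2 h
      obtain ⟨h3', h4'⟩ := hw.2.2.2.2.2 (heq ▸ h)
      exact no2K2' h1 hadj hab h1' h2' h3' h4'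
  have C : G.Coloring (Fin 6) := Coloring.mk f valid
  simpa using C.colorable

end StmtSevenHelpers

/-- Every `(2K₂, HVN)`-free graph `G` satisfies `χ(G) ≤ ω(G) + 3`. -/
theorem stmt7 {V : Type*} [Fintype V] (G : SimpleGraph V)
    (h1 : IndFree graph2K2 G) (h2 : IndFree graphHVN G) :
    G.chromaticNumber ≤ ((G.cliqueNum + 3 : ℕ) : ℕ∞) := by
  classical
  obtain ⟨K, hK⟩ := G.exists_isNClique_cliqueNum
  have hcl := hK.isClique
  have hcard := hK.card_eq
  have hcol : G.Colorable (G.cliqueNum + 3) := by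
    rcases Nat.lt_or_ge G.cliqueNum 2 with hsmall | h2'
    · exact (stmt7CaseSmall (by omega)).mono (by omega)
    · rcases Nat.lt_or_ge G.cliqueNum 4 with hmid | hbig
      · rcases Nat.lt_or_ge G.cliqueNum 3 with hx | hx
        · exact (stmt7Case2 h1 K hcl hcard (by omega)).mono (by omega)
        · exact (stmt7Case3 h1 K hcl hcard (by omega)).mono (by omega)
      · exact (stmt7CaseBig h1 h2 K hcl hcard hbig).mono (by omega)
  exact hcol.chromaticNumber_le
end

section
/- Let G be a connected (2K2, K5 − e)-free graph. Then either G is (2K2, diamond)-free, or there exists a partition (V1, V2, V3, V4, V5) of the vertex set of G such that V1 induces a (2K2, diamond)-free subgraph of G with ω([V1]) ≤ ω(G) − 1, and V2, V3, V4, V5 are independent sets. -/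
open SimpleGraph

section Stmt8Aux

variable {V : Type*} {G : SimpleGraph V}

lemma no2K2 (h1 : IndFree graph2K2 G) {a b c d : V}
    (hab : G.Adj a b) (hcd : G.Adj c d)
    (hac : ¬G.Adj a c) (had : ¬G.Adj a d) (hbc : ¬G.Adj b c) (hbd : ¬G.Adj b d)
    (nac : a ≠ c) (nad : a ≠ d) (nbc : b ≠ c) (nbd : b ≠ d) : False := by
  have nab := hab.ne
  have ncd := hcd.ne
  have hinj : Function.Injective ![a,b,c,d] := by
    intro i j h
    fin_cases i <;> fin_cases j <;>
      simp only [Matrix.cons_val_zero, Matrix.cons_val_one, Matrix.head_cons,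
        Matrix.cons_val_two, Matrix.tail_cons, Matrix.cons_val_three] at h <;>
      first
        | rfl
        | exact absurd h nab | exact absurd h.symm nab
        | exact absurd h ncd | exact absurd h.symm ncd
        | exact absurd h nac | exact absurd h.symm nac
        | exact absurd h nad | exact absurd h.symm nad
        | exact absurd h nbc | exact absurd h.symm nbc
        | exact absurd h nbd | exact absurd h.symm nbd
  refine h1.false ⟨⟨![a,b,c,d], hinj⟩, ?_⟩
  intro i j
  show G.Adj _ _ ↔ _
  fin_cases i <;> fin_cases j <;>
    simp only [Matrix.cons_val_zero, Matrix.cons_val_one, Matrix.head_cons,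
      Matrix.cons_val_two, Matrix.tail_cons, Matrix.cons_val_three] <;>
    simp only [graph2K2, fromRel_adj] <;>
    constructor <;> intro hh <;>
    first
      | decide
      | exact absurd hh G.irrefl
      | exact hab | exact hab.symm | exact hcd | exact hcd.symm
      | exact absurd hh hac | exact absurd hh had
      | exact absurd hh hbc | exact absurd hh hbd
      | exact absurd hh (fun h => hac h.symm) | exact absurd hh (fun h => had h.symm)
      | exact absurd hh (fun h => hbc h.symm) | exact absurd hh (fun h => hbd h.symm)
      | exact absurd rfl hh.1
      | (exfalso; revert hh; decide)

/-- v adjacent to p,q,r but not to s, with p,q,r,s a clique: K5-e. -/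
lemma noK5e (h2 : IndFree graphK5e G) {v s p q r : V}
    (hpq : G.Adj p q) (hpr : G.Adj p r) (hps : G.Adj p s)
    (hqr : G.Adj q r) (hqs : G.Adj q s) (hrs : G.Adj r s)
    (hvp : G.Adj v p) (hvq : G.Adj v q) (hvr : G.Adj v r)
    (hvs : ¬G.Adj v s) (nvs : v ≠ s) : False := by
  have hinj : Function.Injective ![v,s,p,q,r] := by
    intro i j h
    fin_cases i <;> fin_cases j <;>
      simp only [Matrix.cons_val_zero, Matrix.cons_val_one, Matrix.head_cons,
        Matrix.cons_val_two, Matrix.tail_cons, Matrix.cons_val_three,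
        Matrix.cons_val_four] at h <;>
      first
        | rfl
        | exact absurd h nvs | exact absurd h.symm nvs
        | exact absurd h hvp.ne | exact absurd h.symm hvp.ne
        | exact absurd h hvq.ne | exact absurd h.symm hvq.ne
        | exact absurd h hvr.ne | exact absurd h.symm hvr.ne
        | exact absurd h hpq.ne | exact absurd h.symm hpq.ne
        | exact absurd h hpr.ne | exact absurd h.symm hpr.ne
        | exact absurd h hps.ne | exact absurd h.symm hps.ne
        | exact absurd h hqr.ne | exact absurd h.symm hqr.ne
        | exact absurd h hqs.ne | exact absurd h.symm hqs.ne
        | exact absurd h hrs.ne | exact absurd h.symm hrs.ne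
  refine h2.false ⟨⟨![v,s,p,q,r], hinj⟩, ?_⟩
  intro i j
  show G.Adj _ _ ↔ _
  fin_cases i <;> fin_cases j <;>
    simp only [Matrix.cons_val_zero, Matrix.cons_val_one, Matrix.head_cons,
      Matrix.cons_val_two, Matrix.tail_cons, Matrix.cons_val_three,
      Matrix.cons_val_four] <;>
    simp only [graphK5e, fromRel_adj] <;>
    constructor <;> intro hh <;>
    first
      | decide
      | exact absurd hh G.irrefl
      | exact hpq | exact hpq.symm | exact hpr | exact hpr.symm
      | exact hps | exact hps.symm | exact hqr | exact hqr.symm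
      | exact hqs | exact hqs.symm | exact hrs | exact hrs.symm
      | exact hvp | exact hvp.symm | exact hvq | exact hvq.symm
      | exact hvr | exact hvr.symm
      | exact absurd hh hvs
      | exact absurd hh (fun h => hvs h.symm)
      | exact absurd rfl hh.1
      | (exfalso; revert hh; decide)

lemma indfree_induce {W : Type*} {H : SimpleGraph W} (h : IndFree H G) (S : Set V) :
    IndFree H (G.induce S) :=
  ⟨fun e => h.false (e.trans (Embedding.induce S))⟩

lemma cliqueNum_le_of [Fintype V] {m : ℕ}
    (h : ∀ (n : ℕ) (s : Finset V), G.IsNClique n s → n ≤ m) : G.cliqueNum ≤ m :=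
  csSup_le ⟨0, ⟨∅, isNClique_empty.mpr rfl⟩⟩ (fun _ ⟨s, hs⟩ => h _ s hs)

lemma clique3_le [Fintype V] {a b c : V} (hab : G.Adj a b) (hac : G.Adj a c)
    (hbc : G.Adj b c) : 3 ≤ G.cliqueNum := by
  classical
  have hc : G.IsClique ({a,b,c} : Finset V) := by
    intro x hx y hy hxy
    simp only [Finset.coe_insert, Set.mem_insert_iff, Finset.coe_singleton,
      Set.mem_singleton_iff] at hx hy
    rcases hx with rfl|rfl|rfl <;> rcases hy with rfl|rfl|rfl <;>
      first | exact absurd rfl hxy | assumption | exact hab.symm | exact hac.symm |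
        exact hbc.symm
  have hcard : ({a,b,c} : Finset V).card = 3 := by
    rw [Finset.card_insert_of_notMem (by simp [hab.ne, hac.ne]),
      Finset.card_insert_of_notMem (by simp [hbc.ne]), Finset.card_singleton]
  calc 3 = ({a,b,c} : Finset V).card := hcard.symm
    _ ≤ G.cliqueNum := IsClique.card_le_cliqueNum (tc := hc)

lemma clique4_le [Fintype V] {a b c d : V} (hab : G.Adj a b) (hac : G.Adj a c)
    (had : G.Adj a d) (hbc : G.Adj b c) (hbd : G.Adj b d) (hcd : G.Adj c d) :
    4 ≤ G.cliqueNum := by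
  classical
  have hc : G.IsClique ({a,b,c,d} : Finset V) := by
    intro x hx y hy hxy
    simp only [Finset.coe_insert, Set.mem_insert_iff, Finset.coe_singleton,
      Set.mem_singleton_iff] at hx hy
    rcases hx with rfl|rfl|rfl|rfl <;> rcases hy with rfl|rfl|rfl|rfl <;>
      first | exact absurd rfl hxy | assumption | exact hab.symm | exact hac.symm |
        exact hbc.symm | exact had.symm | exact hbd.symm | exact hcd.symm
  have hcard : ({a,b,c,d} : Finset V).card = 4 := by
    rw [Finset.card_insert_of_notMem (by simp [hab.ne, hac.ne, had.ne]),
      Finset.card_insert_of_notMem (by simp [hbc.ne, hbd.ne]),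
      Finset.card_insert_of_notMem (by simp [hcd.ne]), Finset.card_singleton]
  calc 4 = ({a,b,c,d} : Finset V).card := hcard.symm
    _ ≤ G.cliqueNum := IsClique.card_le_cliqueNum (tc := hc)

lemma diamondFree_of_triangleFree (S : Set V)
    (htf : ∀ a b c : V, a ∈ S → b ∈ S → c ∈ S →
      G.Adj a b → G.Adj a c → G.Adj b c → False) :
    IndFree graphDiamond (G.induce S) := by
  constructor
  intro e
  have d01 : graphDiamond.Adj 0 1 := by rw [graphDiamond, fromRel_adj]; decide
  have d03 : graphDiamond.Adj 0 3 := by rw [graphDiamond, fromRel_adj]; decide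
  have d13 : graphDiamond.Adj 1 3 := by rw [graphDiamond, fromRel_adj]; decide
  have h01 : (G.induce S).Adj (e 0) (e 1) := e.map_rel_iff.mpr d01
  have h03 : (G.induce S).Adj (e 0) (e 3) := e.map_rel_iff.mpr d03
  have h13 : (G.induce S).Adj (e 1) (e 3) := e.map_rel_iff.mpr d13
  rw [comap_adj] at h01 h03 h13
  exact htf _ _ _ (e 0).2 (e 1).2 (e 3).2 h01 h03 h13

lemma cliqueNum_le_two_of_triangleFree [Fintype V] (S : Set V)
    (htf : ∀ a b c : V, a ∈ S → b ∈ S → c ∈ S →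
      G.Adj a b → G.Adj a c → G.Adj b c → False) :
    (G.induce S).cliqueNum ≤ 2 := by
  classical
  apply cliqueNum_le_of
  intro n s hs
  by_contra hn
  have h3 : 3 ≤ s.card := by rw [hs.card_eq]; omega
  obtain ⟨t, hts, ht⟩ := Finset.exists_subset_card_eq h3
  obtain ⟨x, y, z, hxy, hxz, hyz, rfl⟩ := Finset.card_eq_three.mp ht
  have hx := hts (by simp : x ∈ _)
  have hy := hts (by simp : y ∈ _)
  have hz := hts (by simp : z ∈ _)
  have axy : (G.induce S).Adj x y := hs.1 (by simpa using hx) (by simpa using hy) hxy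
  have axz : (G.induce S).Adj x z := hs.1 (by simpa using hx) (by simpa using hz) hxz
  have ayz : (G.induce S).Adj y z := hs.1 (by simpa using hy) (by simpa using hz) hyz
  rw [comap_adj] at axy axz ayz
  exact htf _ _ _ x.2 y.2 z.2 axy axz ayz

lemma clique5_le [Fintype V] {a b c d e : V}
    (hab : G.Adj a b) (hac : G.Adj a c) (had : G.Adj a d) (hae : G.Adj a e)
    (hbc : G.Adj b c) (hbd : G.Adj b d) (hbe : G.Adj b e)
    (hcd : G.Adj c d) (hce : G.Adj c e) (hde : G.Adj d e) :
    5 ≤ G.cliqueNum := by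
  classical
  have hc : G.IsClique ({a,b,c,d,e} : Finset V) := by
    intro x hx y hy hxy
    simp only [Finset.coe_insert, Set.mem_insert_iff, Finset.coe_singleton,
      Set.mem_singleton_iff] at hx hy
    rcases hx with rfl|rfl|rfl|rfl|rfl <;> rcases hy with rfl|rfl|rfl|rfl|rfl <;>
      first | exact absurd rfl hxy | assumption | exact hab.symm | exact hac.symm |
        exact hbc.symm | exact had.symm | exact hbd.symm | exact hcd.symm |
        exact hae.symm | exact hbe.symm | exact hce.symm | exact hde.symm
  have hcard : ({a,b,c,d,e} : Finset V).card = 5 := by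
    rw [Finset.card_insert_of_notMem (by simp [hab.ne, hac.ne, had.ne, hae.ne]),
      Finset.card_insert_of_notMem (by simp [hbc.ne, hbd.ne, hbe.ne]),
      Finset.card_insert_of_notMem (by simp [hcd.ne, hce.ne]),
      Finset.card_insert_of_notMem (by simp [hde.ne]), Finset.card_singleton]
  calc 5 = ({a,b,c,d,e} : Finset V).card := hcard.symm
    _ ≤ G.cliqueNum := IsClique.card_le_cliqueNum (tc := hc)

/-- clique set induced props -/
lemma cliqueSet_props [Fintype V] (h1 : IndFree graph2K2 G) (F : Finset V)
    (hcl : G.IsClique (↑F : Set V)) :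
    IndFree graph2K2 (G.induce (↑F : Set V)) ∧
      IndFree graphDiamond (G.induce (↑F : Set V)) ∧
      (G.induce (↑F : Set V)).cliqueNum ≤ F.card := by
  classical
  refine ⟨⟨fun e => h1.false (e.trans (Embedding.induce _))⟩, ?_, ?_⟩
  · constructor
    intro e
    have hne : (e 0).1 ≠ (e 2).1 := by
      intro h
      have : e 0 = e 2 := Subtype.ext h
      have := e.injective this
      exact absurd this (by decide)
    have : G.Adj (e 0).1 (e 2).1 := hcl (e 0).2 (e 2).2 hne
    have h02 : (G.induce (↑F : Set V)).Adj (e 0) (e 2) := by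
      rw [comap_adj]; exact this
    have : graphDiamond.Adj 0 2 := e.map_rel_iff.mp h02
    rw [graphDiamond, fromRel_adj] at this
    revert this; decide
  · apply cliqueNum_le_of
    intro n s hs
    calc n = s.card := hs.card_eq.symm
      _ ≤ Fintype.card (↑F : Set V) := Finset.card_le_univ s
      _ = F.card := by simp [Fintype.card_coe]

lemma isIndep_mono {s t : Set V} (h : IsIndep G t) (hsub : s ⊆ t) : IsIndep G s :=
  Set.Pairwise.mono hsub h

lemma assemble [Fintype V] (S1 S2 S3 S4 S5 : Set V)
    (hcov : ∀ v, v ∈ S1 ∨ v ∈ S2 ∨ v ∈ S3 ∨ v ∈ S4 ∨ v ∈ S5)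
    (hb1 : IndFree graph2K2 (G.induce S1)) (hb2 : IndFree graphDiamond (G.induce S1))
    (hb3 : (G.induce S1).cliqueNum ≤ G.cliqueNum - 1)
    (i2 : IsIndep G S2) (i3 : IsIndep G S3) (i4 : IsIndep G S4) (i5 : IsIndep G S5) :
    ∃ V1 V2 V3 V4 V5 : Set V,
        V1 ∪ V2 ∪ V3 ∪ V4 ∪ V5 = (Set.univ : Set V) ∧
        List.Pairwise Disjoint [V1, V2, V3, V4, V5] ∧
        IndFree graph2K2 (G.induce V1) ∧ IndFree graphDiamond (G.induce V1) ∧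
        (G.induce V1).cliqueNum ≤ G.cliqueNum - 1 ∧
        IsIndep G V2 ∧ IsIndep G V3 ∧ IsIndep G V4 ∧ IsIndep G V5 := by
  refine ⟨S1, S2 \ S1, S3 \ (S1 ∪ S2), S4 \ (S1 ∪ S2 ∪ S3), S5 \ (S1 ∪ S2 ∪ S3 ∪ S4),
    ?_, ?_, hb1, hb2, hb3,
    isIndep_mono i2 Set.diff_subset, isIndep_mono i3 Set.diff_subset,
    isIndep_mono i4 Set.diff_subset, isIndep_mono i5 Set.diff_subset⟩
  · ext v
    simp only [Set.mem_union, Set.mem_diff, Set.mem_univ, iff_true]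
    have := hcov v
    tauto
  · have D : ∀ (X Y : Set V), (∀ v, v ∈ X → v ∈ Y → False) → Disjoint X Y :=
      fun X Y h => Set.disjoint_left.mpr (fun {a} ha hb => h a ha hb)
    refine List.Pairwise.cons ?_ (List.Pairwise.cons ?_ (List.Pairwise.cons ?_
      (List.Pairwise.cons ?_ (List.pairwise_singleton _ _))))
    · intro Y hY
      simp only [List.mem_cons, List.not_mem_nil, or_false] at hY
      rcases hY with rfl|rfl|rfl|rfl <;>
        exact D _ _ (fun v hv hw => by simp only [Set.mem_union, Set.mem_diff] at hv hw; tauto)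
    · intro Y hY
      simp only [List.mem_cons, List.not_mem_nil, or_false] at hY
      rcases hY with rfl|rfl|rfl <;>
        exact D _ _ (fun v hv hw => by simp only [Set.mem_union, Set.mem_diff] at hv hw; tauto)
    · intro Y hY
      simp only [List.mem_cons, List.not_mem_nil, or_false] at hY
      rcases hY with rfl|rfl <;>
        exact D _ _ (fun v hv hw => by simp only [Set.mem_union, Set.mem_diff] at hv hw; tauto)
    · intro Y hY
      simp only [List.mem_cons, List.not_mem_nil, or_false] at hY
      rcases hY with rfl <;>
        exact D _ _ (fun v hv hw => by simp only [Set.mem_union, Set.mem_diff] at hv hw; tauto)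

lemma noC2 (h1 : IndFree graph2K2 G) {p q y z : V} (hpq : G.Adj p q) (hyz : G.Adj y z)
    (hyp : ¬G.Adj y p) (hyq : ¬G.Adj y q) (hzp : ¬G.Adj z p) (hzq : ¬G.Adj z q) : False :=
  no2K2 h1 hyz hpq hyp hyq hzp hzq
    (fun h => hyq (by rw [h]; exact hpq)) (fun h => hyp (by rw [h]; exact hpq.symm))
    (fun h => hzq (by rw [h]; exact hpq)) (fun h => hzp (by rw [h]; exact hpq.symm))

lemma caseOmega3 [Fintype V] (h1 : IndFree graph2K2 G) (hw : G.cliqueNum = 3)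
    {x1 x2 x3 : V} (e12 : G.Adj x1 x2) (e13 : G.Adj x1 x3) (e23 : G.Adj x2 x3) :
    ∃ V1 V2 V3 V4 V5 : Set V,
        V1 ∪ V2 ∪ V3 ∪ V4 ∪ V5 = (Set.univ : Set V) ∧
        List.Pairwise Disjoint [V1, V2, V3, V4, V5] ∧
        IndFree graph2K2 (G.induce V1) ∧ IndFree graphDiamond (G.induce V1) ∧
        (G.induce V1).cliqueNum ≤ G.cliqueNum - 1 ∧
        IsIndep G V2 ∧ IsIndep G V3 ∧ IsIndep G V4 ∧ IsIndep G V5 := by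
  set S1 : Set V := {v | (¬G.Adj v x1 ∧ ¬G.Adj v x2) ∨ (¬G.Adj v x1 ∧ ¬G.Adj v x3)} with hS1
  have htf : ∀ a b c : V, a ∈ S1 → b ∈ S1 → c ∈ S1 →
      G.Adj a b → G.Adj a c → G.Adj b c → False := by
    intro a b c ha hb hc hab hac hbc
    rw [hS1, Set.mem_setOf_eq] at ha hb hc
    rcases ha with ⟨ha1, ha2⟩|⟨ha1, ha2⟩ <;> rcases hb with ⟨hb1, hb2⟩|⟨hb1, hb2⟩ <;>
      rcases hc with ⟨hc1, hc2⟩|⟨hc1, hc2⟩ <;>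
      first
        | exact noC2 h1 e12 hab ha1 ha2 hb1 hb2
        | exact noC2 h1 e13 hab ha1 ha2 hb1 hb2
        | exact noC2 h1 e12 hac ha1 ha2 hc1 hc2
        | exact noC2 h1 e13 hac ha1 ha2 hc1 hc2
        | exact noC2 h1 e12 hbc hb1 hb2 hc1 hc2
        | exact noC2 h1 e13 hbc hb1 hb2 hc1 hc2
  apply assemble S1 {v | ¬G.Adj v x2 ∧ ¬G.Adj v x3}
    {v | G.Adj v x2 ∧ G.Adj v x3} {v | G.Adj v x1 ∧ G.Adj v x3}
    {v | G.Adj v x1 ∧ G.Adj v x2}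
  · intro v
    simp only [hS1, Set.mem_setOf_eq]
    by_cases a1 : G.Adj v x1 <;> by_cases a2 : G.Adj v x2 <;> by_cases a3 : G.Adj v x3 <;>
      tauto
  · exact indfree_induce h1 S1
  · exact diamondFree_of_triangleFree S1 htf
  · have := cliqueNum_le_two_of_triangleFree S1 htf
    omega
  · intro u hu v hv hne hadj
    rw [Set.mem_setOf_eq] at hu hv
    exact noC2 h1 e23 hadj hu.1 hu.2 hv.1 hv.2
  · intro u hu v hv hne hadj
    rw [Set.mem_setOf_eq] at hu hv
    have := clique4_le hadj hu.1 hu.2 hv.1 hv.2 e23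
    omega
  · intro u hu v hv hne hadj
    rw [Set.mem_setOf_eq] at hu hv
    have := clique4_le hadj hu.1 hu.2 hv.1 hv.2 e13
    omega
  · intro u hu v hv hne hadj
    rw [Set.mem_setOf_eq] at hu hv
    have := clique4_le hadj hu.1 hu.2 hv.1 hv.2 e12
    omega

lemma caseOmega4 [Fintype V] (h1 : IndFree graph2K2 G) (h2 : IndFree graphK5e G)
    (hw : G.cliqueNum = 4) {x1 x2 x3 x4 : V}
    (e12 : G.Adj x1 x2) (e13 : G.Adj x1 x3) (e14 : G.Adj x1 x4)
    (e23 : G.Adj x2 x3) (e24 : G.Adj x2 x4) (e34 : G.Adj x3 x4) :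
    ∃ V1 V2 V3 V4 V5 : Set V,
        V1 ∪ V2 ∪ V3 ∪ V4 ∪ V5 = (Set.univ : Set V) ∧
        List.Pairwise Disjoint [V1, V2, V3, V4, V5] ∧
        IndFree graph2K2 (G.induce V1) ∧ IndFree graphDiamond (G.induce V1) ∧
        (G.induce V1).cliqueNum ≤ G.cliqueNum - 1 ∧
        IsIndep G V2 ∧ IsIndep G V3 ∧ IsIndep G V4 ∧ IsIndep G V5 := by
  set S1 : Set V := {v | (¬G.Adj v x1 ∧ ¬G.Adj v x2) ∨ (¬G.Adj v x3 ∧ ¬G.Adj v x4)} with hS1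
  have htf : ∀ a b c : V, a ∈ S1 → b ∈ S1 → c ∈ S1 →
      G.Adj a b → G.Adj a c → G.Adj b c → False := by
    intro a b c ha hb hc hab hac hbc
    rw [hS1, Set.mem_setOf_eq] at ha hb hc
    rcases ha with ⟨ha1, ha2⟩|⟨ha1, ha2⟩ <;> rcases hb with ⟨hb1, hb2⟩|⟨hb1, hb2⟩ <;>
      rcases hc with ⟨hc1, hc2⟩|⟨hc1, hc2⟩ <;>
      first
        | exact noC2 h1 e12 hab ha1 ha2 hb1 hb2
        | exact noC2 h1 e34 hab ha1 ha2 hb1 hb2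
        | exact noC2 h1 e12 hac ha1 ha2 hc1 hc2
        | exact noC2 h1 e34 hac ha1 ha2 hc1 hc2
        | exact noC2 h1 e12 hbc hb1 hb2 hc1 hc2
        | exact noC2 h1 e34 hbc hb1 hb2 hc1 hc2
  apply assemble S1
    {v | (¬G.Adj v x1 ∧ ¬G.Adj v x3) ∨ v = x1}
    {v | (¬G.Adj v x2 ∧ ¬G.Adj v x4) ∨ v = x2}
    {v | (¬G.Adj v x1 ∧ ¬G.Adj v x4) ∨ v = x4}
    {v | (¬G.Adj v x2 ∧ ¬G.Adj v x3) ∨ v = x3}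
  · intro v
    simp only [hS1, Set.mem_setOf_eq]
    by_cases hv1 : v = x1
    · exact Or.inr (Or.inl (Or.inr hv1))
    by_cases hv2 : v = x2
    · exact Or.inr (Or.inr (Or.inl (Or.inr hv2)))
    by_cases hv3 : v = x3
    · exact Or.inr (Or.inr (Or.inr (Or.inr (Or.inr hv3))))
    by_cases hv4 : v = x4
    · exact Or.inr (Or.inr (Or.inr (Or.inl (Or.inr hv4))))
    have F : ∀ a b c d : V, G.Adj a b → G.Adj a c → G.Adj a d → G.Adj b c → G.Adj b d →
        G.Adj c d → G.Adj v a → G.Adj v b → G.Adj v c → v ≠ d → False := by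
      intro a b c d hab hac had hbc hbd hcd hva hvb hvc hvd
      by_cases h : G.Adj v d
      · have := clique5_le hva hvb hvc h hab hac had hbc hbd hcd
        omega
      · exact noK5e h2 hab hac had hbc hbd hcd hva hvb hvc h hvd
    by_cases a1 : G.Adj v x1 <;> by_cases a2 : G.Adj v x2 <;>
      by_cases a3 : G.Adj v x3 <;> by_cases a4 : G.Adj v x4
    · exact absurd (F x1 x2 x3 x4 e12 e13 e14 e23 e24 e34 a1 a2 a3 hv4) id
    · exact absurd (F x1 x2 x3 x4 e12 e13 e14 e23 e24 e34 a1 a2 a3 hv4) id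
    · exact absurd (F x1 x2 x4 x3 e12 e14 e13 e24 e23 e34.symm a1 a2 a4 hv3) id
    · exact Or.inl (Or.inr ⟨a3, a4⟩)
    · exact absurd (F x1 x3 x4 x2 e13 e14 e12 e34 e23.symm e24.symm a1 a3 a4 hv2) id
    · exact Or.inr (Or.inr (Or.inl (Or.inl ⟨a2, a4⟩)))
    · exact Or.inr (Or.inr (Or.inr (Or.inr (Or.inl ⟨a2, a3⟩))))
    · exact Or.inr (Or.inr (Or.inr (Or.inr (Or.inl ⟨a2, a3⟩))))
    · exact absurd (F x2 x3 x4 x1 e23 e24 e12.symm e34 e13.symm e14.symm a2 a3 a4 hv1) id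
    · exact Or.inr (Or.inr (Or.inr (Or.inl (Or.inl ⟨a1, a4⟩))))
    · exact Or.inr (Or.inl (Or.inl ⟨a1, a3⟩))
    · exact Or.inr (Or.inl (Or.inl ⟨a1, a3⟩))
    · exact Or.inl (Or.inl ⟨a1, a2⟩)
    · exact Or.inl (Or.inl ⟨a1, a2⟩)
    · exact Or.inl (Or.inl ⟨a1, a2⟩)
    · exact Or.inl (Or.inl ⟨a1, a2⟩)
  · exact indfree_induce h1 S1
  · exact diamondFree_of_triangleFree S1 htf
  · have := cliqueNum_le_two_of_triangleFree S1 htf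
    omega
  · intro u hu v hv hne hadj
    rw [Set.mem_setOf_eq] at hu hv
    rcases hu with ⟨hu1, hu2⟩|rfl <;> rcases hv with ⟨hv1, hv2⟩|rfl
    · exact noC2 h1 e13 hadj hu1 hu2 hv1 hv2
    · exact hu1 hadj
    · exact hv1 hadj.symm
    · exact hne rfl
  · intro u hu v hv hne hadj
    rw [Set.mem_setOf_eq] at hu hv
    rcases hu with ⟨hu1, hu2⟩|rfl <;> rcases hv with ⟨hv1, hv2⟩|rfl
    · exact noC2 h1 e24 hadj hu1 hu2 hv1 hv2
    · exact hu1 hadj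
    · exact hv1 hadj.symm
    · exact hne rfl
  · intro u hu v hv hne hadj
    rw [Set.mem_setOf_eq] at hu hv
    rcases hu with ⟨hu1, hu2⟩|rfl <;> rcases hv with ⟨hv1, hv2⟩|rfl
    · exact noC2 h1 e14 hadj hu1 hu2 hv1 hv2
    · exact hu2 hadj
    · exact hv2 hadj.symm
    · exact hne rfl
  · intro u hu v hv hne hadj
    rw [Set.mem_setOf_eq] at hu hv
    rcases hu with ⟨hu1, hu2⟩|rfl <;> rcases hv with ⟨hv1, hv2⟩|rfl
    · exact noC2 h1 e23 hadj hu1 hu2 hv1 hv2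
    · exact hu2 hadj
    · exact hv2 hadj.symm
    · exact hne rfl

lemma caseOmega5 [Fintype V] (h1 : IndFree graph2K2 G) (h2 : IndFree graphK5e G)
    (hw5 : 5 ≤ G.cliqueNum) (Q : Finset V) (hQ : G.IsNClique G.cliqueNum Q) :
    ∃ V1 V2 V3 V4 V5 : Set V,
        V1 ∪ V2 ∪ V3 ∪ V4 ∪ V5 = (Set.univ : Set V) ∧
        List.Pairwise Disjoint [V1, V2, V3, V4, V5] ∧
        IndFree graph2K2 (G.induce V1) ∧ IndFree graphDiamond (G.induce V1) ∧
        (G.induce V1).cliqueNum ≤ G.cliqueNum - 1 ∧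
        IsIndep G V2 ∧ IsIndep G V3 ∧ IsIndep G V4 ∧ IsIndep G V5 := by
  classical
  have hQcard : Q.card = G.cliqueNum := hQ.2
  have adjQ : ∀ u v, u ∈ Q → v ∈ Q → u ≠ v → G.Adj u v := fun u v hu hv hne =>
    hQ.1 (Finset.mem_coe.mpr hu) (Finset.mem_coe.mpr hv) hne
  obtain ⟨q0, hq0⟩ : ∃ q0, q0 ∈ Q := Finset.card_pos.mp (by omega)
  -- S1 : the clique minus one vertex
  have hclE : G.IsClique (↑(Q.erase q0) : Set V) :=
    hQ.1.subset (by exact_mod_cast Finset.erase_subset q0 Q)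
  obtain ⟨p1, p2, p3⟩ := cliqueSet_props h1 (Q.erase q0) hclE
  have hb3 : (G.induce (↑(Q.erase q0) : Set V)).cliqueNum ≤ G.cliqueNum - 1 := by
    refine p3.trans ?_
    rw [Finset.card_erase_of_mem hq0]
    omega
  -- every vertex outside Q has at most 2 neighbours in Q
  have claim1 : ∀ x, x ∉ Q → (Q.filter (fun y => G.Adj x y)).card ≤ 2 := by
    intro x hx
    by_contra hc
    push_neg at hc
    obtain ⟨t, hts, ht3⟩ := Finset.exists_subset_card_eq (show 3 ≤ _ from hc)
    obtain ⟨p, q, r, hpq, hpr, hqr, rfl⟩ := Finset.card_eq_three.mp ht3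
    have hp := Finset.mem_filter.mp (hts (by simp : p ∈ ({p, q, r} : Finset V)))
    have hq := Finset.mem_filter.mp (hts (by simp : q ∈ ({p, q, r} : Finset V)))
    have hr := Finset.mem_filter.mp (hts (by simp : r ∈ ({p, q, r} : Finset V)))
    by_cases hall : ∀ s ∈ Q, G.Adj x s
    · have hcl5 : G.IsClique (↑(insert x Q) : Set V) := by
        rw [Finset.coe_insert]
        exact hQ.1.insert (fun b hb _ => hall b hb)
      have hcard5 : (insert x Q).card = G.cliqueNum + 1 := by
        rw [Finset.card_insert_of_notMem hx, hQcard]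
      have := IsClique.card_le_cliqueNum (tc := hcl5)
      omega
    · push_neg at hall
      obtain ⟨s, hsQ, hsAdj⟩ := hall
      have nsp : s ≠ p := fun h => hsAdj (by rw [h]; exact hp.2)
      have nsq : s ≠ q := fun h => hsAdj (by rw [h]; exact hq.2)
      have nsr : s ≠ r := fun h => hsAdj (by rw [h]; exact hr.2)
      exact noK5e h2 (adjQ p q hp.1 hq.1 hpq) (adjQ p r hp.1 hr.1 hpr)
        (adjQ p s hp.1 hsQ (Ne.symm nsp)) (adjQ q r hq.1 hr.1 hqr)
        (adjQ q s hq.1 hsQ (Ne.symm nsq)) (adjQ r s hr.1 hsQ (Ne.symm nsr))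
        hp.2 hq.2 hr.2 hsAdj (fun h => hx (h ▸ hsQ))
  -- no triangles outside Q
  have noTriO : ∀ u v w, u ∉ Q → v ∉ Q → w ∉ Q →
      G.Adj u v → G.Adj u w → G.Adj v w → False := by
    have pairFact : ∀ a b, a ∉ Q → b ∉ Q → G.Adj a b →
        Q.card ≤ ((Q.filter (fun y => G.Adj a y)) ∪ (Q.filter (fun y => G.Adj b y))).card
          + 1 := by
      intro a b ha hb hab
      set Na := Q.filter (fun y => G.Adj a y) with hNa
      set Nb := Q.filter (fun y => G.Adj b y) with hNb
      set M := Q \ (Na ∪ Nb) with hM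
      have hM1 : M.card ≤ 1 := by
        by_contra hc
        push_neg at hc
        obtain ⟨t, hts, ht2⟩ := Finset.exists_subset_card_eq (show 2 ≤ _ from hc)
        obtain ⟨s, t', hst, rfl⟩ := Finset.card_eq_two.mp ht2
        have hs := hts (by simp : s ∈ ({s, t'} : Finset V))
        have ht' := hts (by simp : t' ∈ ({s, t'} : Finset V))
        rw [hM, Finset.mem_sdiff, Finset.notMem_union] at hs ht'
        have hsa : ¬G.Adj a s := fun h => hs.2.1 (Finset.mem_filter.mpr ⟨hs.1, h⟩)
        have hsb : ¬G.Adj b s := fun h => hs.2.2 (Finset.mem_filter.mpr ⟨hs.1, h⟩)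
        have hta : ¬G.Adj a t' := fun h => ht'.2.1 (Finset.mem_filter.mpr ⟨ht'.1, h⟩)
        have htb : ¬G.Adj b t' := fun h => ht'.2.2 (Finset.mem_filter.mpr ⟨ht'.1, h⟩)
        exact no2K2 h1 hab (adjQ s t' hs.1 ht'.1 hst) hsa hta hsb htb
          (fun h => ha (h ▸ hs.1)) (fun h => ha (h ▸ ht'.1))
          (fun h => hb (h ▸ hs.1)) (fun h => hb (h ▸ ht'.1))
      have hsub : Q ⊆ (Na ∪ Nb) ∪ M := by
        intro y hy
        by_cases hmem : y ∈ Na ∪ Nb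
        · exact Finset.mem_union_left _ hmem
        · exact Finset.mem_union_right _ (Finset.mem_sdiff.mpr ⟨hy, hmem⟩)
      calc Q.card ≤ ((Na ∪ Nb) ∪ M).card := Finset.card_le_card hsub
        _ ≤ (Na ∪ Nb).card + M.card := Finset.card_union_le _ _
        _ ≤ (Na ∪ Nb).card + 1 := by omega
    intro u v w hu hv hw huv huw hvw
    have cu := claim1 u hu
    have cv := claim1 v hv
    have cw := claim1 w hw
    have buv := pairFact u v hu hv huv
    have buw := pairFact u w hu hw huw
    have bvw := pairFact v w hv hw hvw
    have euv := Finset.card_union_add_card_inter (Q.filter (fun y => G.Adj u y))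
      (Q.filter (fun y => G.Adj v y))
    have euw := Finset.card_union_add_card_inter (Q.filter (fun y => G.Adj u y))
      (Q.filter (fun y => G.Adj w y))
    have evw := Finset.card_union_add_card_inter (Q.filter (fun y => G.Adj v y))
      (Q.filter (fun y => G.Adj w y))
    have duv : Disjoint (Q.filter (fun y => G.Adj u y)) (Q.filter (fun y => G.Adj v y)) :=
      Finset.disjoint_iff_inter_eq_empty.mpr (Finset.card_eq_zero.mp (by omega))
    have duw : Disjoint (Q.filter (fun y => G.Adj u y)) (Q.filter (fun y => G.Adj w y)) :=
      Finset.disjoint_iff_inter_eq_empty.mpr (Finset.card_eq_zero.mp (by omega))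
    have dvw : Disjoint (Q.filter (fun y => G.Adj v y)) (Q.filter (fun y => G.Adj w y)) :=
      Finset.disjoint_iff_inter_eq_empty.mpr (Finset.card_eq_zero.mp (by omega))
    have hdisj : Disjoint (Q.filter (fun y => G.Adj u y) ∪ Q.filter (fun y => G.Adj v y))
        (Q.filter (fun y => G.Adj w y)) := Finset.disjoint_union_left.mpr ⟨duw, dvw⟩
    have c1 := Finset.card_union_of_disjoint duv
    have c2 := Finset.card_union_of_disjoint hdisj
    have csub : (Q.filter (fun y => G.Adj u y) ∪ Q.filter (fun y => G.Adj v y)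
        ∪ Q.filter (fun y => G.Adj w y)).card ≤ Q.card :=
      Finset.card_le_card (Finset.union_subset
        (Finset.union_subset (Finset.filter_subset _ _) (Finset.filter_subset _ _))
        (Finset.filter_subset _ _))
    omega
  -- now split on whether there is an edge outside Q
  by_cases hE : ∃ a b, a ∉ Q ∧ b ∉ Q ∧ G.Adj a b
  · obtain ⟨a, b, ha, hb, hab⟩ := hE
    apply assemble (↑(Q.erase q0) : Set V) {q0}
      {v | v ∉ Q ∧ G.Adj a v} {v | v ∉ Q ∧ G.Adj b v}
      {v | v ∉ Q ∧ ¬G.Adj a v ∧ ¬G.Adj b v}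
    · intro v
      by_cases hvQ : v ∈ Q
      · by_cases hv0 : v = q0
        · exact Or.inr (Or.inl hv0)
        · exact Or.inl (Finset.mem_coe.mpr (Finset.mem_erase.mpr ⟨hv0, hvQ⟩))
      · by_cases hva : G.Adj a v
        · exact Or.inr (Or.inr (Or.inl ⟨hvQ, hva⟩))
        · by_cases hvb : G.Adj b v
          · exact Or.inr (Or.inr (Or.inr (Or.inl ⟨hvQ, hvb⟩)))
          · exact Or.inr (Or.inr (Or.inr (Or.inr ⟨hvQ, hva, hvb⟩)))
    · exact p1
    · exact p2
    · exact hb3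
    · exact Set.pairwise_singleton q0 _
    · intro x hx y hy hne hadj
      exact noTriO a x y ha hx.1 hy.1 hx.2 hy.2 hadj
    · intro x hx y hy hne hadj
      exact noTriO b x y hb hx.1 hy.1 hx.2 hy.2 hadj
    · intro x hx y hy hne hadj
      exact no2K2 h1 hadj hab
        (fun h => hx.2.1 h.symm) (fun h => hx.2.2 h.symm)
        (fun h => hy.2.1 h.symm) (fun h => hy.2.2 h.symm)
        (fun h => hx.2.2 (by rw [h]; exact hab.symm))
        (fun h => hx.2.1 (by rw [h]; exact hab))
        (fun h => hy.2.2 (by rw [h]; exact hab.symm))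
        (fun h => hy.2.1 (by rw [h]; exact hab))
  · apply assemble (↑(Q.erase q0) : Set V) {q0} {v | v ∉ Q} ∅ ∅
    · intro v
      by_cases hvQ : v ∈ Q
      · by_cases hv0 : v = q0
        · exact Or.inr (Or.inl hv0)
        · exact Or.inl (Finset.mem_coe.mpr (Finset.mem_erase.mpr ⟨hv0, hvQ⟩))
      · exact Or.inr (Or.inr (Or.inl hvQ))
    · exact p1
    · exact p2
    · exact hb3
    · exact Set.pairwise_singleton q0 _
    · intro x hx y hy hne hadj
      exact hE ⟨x, y, hx, hy, hadj⟩
    · exact Set.pairwise_empty _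
    · exact Set.pairwise_empty _

end Stmt8Aux

/-- Structure of connected `(2K₂, K₅ - e)`-free graphs. -/
theorem stmt8 {V : Type*} [Fintype V] (G : SimpleGraph V)
    (hconn : G.Connected) (h1 : IndFree graph2K2 G) (h2 : IndFree graphK5e G) :
    (IndFree graph2K2 G ∧ IndFree graphDiamond G) ∨
      ∃ V1 V2 V3 V4 V5 : Set V,
        V1 ∪ V2 ∪ V3 ∪ V4 ∪ V5 = (Set.univ : Set V) ∧
        List.Pairwise Disjoint [V1, V2, V3, V4, V5] ∧
        IndFree graph2K2 (G.induce V1) ∧ IndFree graphDiamond (G.induce V1) ∧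
        (G.induce V1).cliqueNum ≤ G.cliqueNum - 1 ∧
        IsIndep G V2 ∧ IsIndep G V3 ∧ IsIndep G V4 ∧ IsIndep G V5 := by
  classical
  by_cases hd : IndFree graphDiamond G
  · exact Or.inl ⟨h1, hd⟩
  right
  rw [IndFree, not_isEmpty_iff] at hd
  obtain ⟨e⟩ := hd
  have d01 : graphDiamond.Adj 0 1 := by rw [graphDiamond, fromRel_adj]; decide
  have d03 : graphDiamond.Adj 0 3 := by rw [graphDiamond, fromRel_adj]; decide
  have d13 : graphDiamond.Adj 1 3 := by rw [graphDiamond, fromRel_adj]; decide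
  have t01 : G.Adj (e 0) (e 1) := e.map_rel_iff.mpr d01
  have t03 : G.Adj (e 0) (e 3) := e.map_rel_iff.mpr d03
  have t13 : G.Adj (e 1) (e 3) := e.map_rel_iff.mpr d13
  have hw3 : 3 ≤ G.cliqueNum := clique3_le t01 t03 t13
  obtain ⟨Q, hQ⟩ := G.exists_isNClique_cliqueNum
  by_cases hc3 : G.cliqueNum = 3
  · exact caseOmega3 h1 hc3 t01 t03 t13
  by_cases hc4 : G.cliqueNum = 4
  · have hQc : Q.card = 4 := by rw [hQ.2, hc4]
    obtain ⟨x1, hx1⟩ := Finset.card_pos.mp (show 0 < Q.card by omega)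
    have hE3 : (Q.erase x1).card = 3 := by rw [Finset.card_erase_of_mem hx1, hQc]
    obtain ⟨x2, x3, x4, n23, n24, n34, hEq⟩ := Finset.card_eq_three.mp hE3
    have hx2e : x2 ∈ Q.erase x1 := by rw [hEq]; simp
    have hx3e : x3 ∈ Q.erase x1 := by rw [hEq]; simp
    have hx4e : x4 ∈ Q.erase x1 := by rw [hEq]; simp
    have hx2 := Finset.mem_of_mem_erase hx2e
    have hx3 := Finset.mem_of_mem_erase hx3e
    have hx4 := Finset.mem_of_mem_erase hx4e
    have n12 : x1 ≠ x2 := fun h => (Finset.mem_erase.mp hx2e).1 h.symm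
    have n13 : x1 ≠ x3 := fun h => (Finset.mem_erase.mp hx3e).1 h.symm
    have n14 : x1 ≠ x4 := fun h => (Finset.mem_erase.mp hx4e).1 h.symm
    have adjQ : ∀ u v, u ∈ Q → v ∈ Q → u ≠ v → G.Adj u v := fun u v hu hv hne =>
      hQ.1 (Finset.mem_coe.mpr hu) (Finset.mem_coe.mpr hv) hne
    exact caseOmega4 h1 h2 hc4 (adjQ x1 x2 hx1 hx2 n12) (adjQ x1 x3 hx1 hx3 n13)
      (adjQ x1 x4 hx1 hx4 n14) (adjQ x2 x3 hx2 hx3 n23) (adjQ x2 x4 hx2 hx4 n24)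
      (adjQ x3 x4 hx3 hx4 n34)
  · exact caseOmega5 h1 h2 (by omega) Q hQ
end

section
/- Let H be any graph and let f : ℕ → ℕ. Suppose that every (2K2, H)-free graph G' satisfies χ(G') ≤ f(ω(G')). Then every (2K2, K1+H)-free graph G with at least one edge satisfies χ(G) ≤ 2·f(ω(G) − 1) + 1. -/
open SimpleGraph

/-- helper lemmas for stmt10 -/
lemma indFree_induce' {W V : Type*} {X : SimpleGraph W} {G : SimpleGraph V}
    (h : IndFree X G) (s : Set V) : IndFree X (G.induce s) :=
  ⟨fun e => h.false ((SimpleGraph.Embedding.induce s).comp e)⟩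

lemma indFree_neighbor' {W V : Type*} {H : SimpleGraph W} {G : SimpleGraph V}
    (h : IndFree (joinK1 H) G) (x : V) : IndFree H (G.induce (G.neighborSet x)) := by
  constructor
  intro e
  apply h.false
  have hmem : ∀ w : W, ((e w : ↥(G.neighborSet x)) : V) ∈ G.neighborSet x := fun w => (e w).2
  refine ⟨⟨fun o => Option.elim o x (fun w => ((e w : ↥(G.neighborSet x)) : V)), ?_⟩, ?_⟩
  · intro a b hab
    cases a <;> cases b <;>
      simp only [Option.elim_none, Option.elim_some] at hab
    · rfl
    · rename_i w; have hw := hmem w; rw [← hab] at hw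
      exact absurd hw (G.notMem_neighborSet_self)
    · rename_i w; have hw := hmem w; rw [hab] at hw
      exact absurd hw (G.notMem_neighborSet_self)
    · exact congrArg some (e.injective (Subtype.ext hab))
  · intro a b
    change G.Adj (Option.elim a x (fun w => ((e w : ↥(G.neighborSet x)) : V)))
      (Option.elim b x (fun w => ((e w : ↥(G.neighborSet x)) : V))) ↔ (joinK1 H).Adj a b
    have he : ∀ w w' : W,
        G.Adj ((e w : ↥(G.neighborSet x)) : V) ((e w' : ↥(G.neighborSet x)) : V) ↔ H.Adj w w' :=
      fun w w' => e.map_adj_iff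
    cases a <;> cases b <;>
      simp only [Function.Embedding.coeFn_mk, Option.elim_none, Option.elim_some]
    · simp [joinK1]
    · constructor
      · intro _; simp [joinK1, SimpleGraph.fromRel_adj]
      · intro _; exact hmem _
    · constructor
      · intro _; simp [joinK1, SimpleGraph.fromRel_adj]
      · intro _; exact G.adj_symm (hmem _)
    · rename_i w w'
      rw [he w w']
      constructor
      · intro hww'
        simp only [joinK1, SimpleGraph.fromRel_adj]
        refine ⟨by simp [hww'.ne], Or.inl (Or.inl ⟨w, w', rfl, rfl, hww'⟩)⟩
      · intro hj
        simp only [joinK1, SimpleGraph.fromRel_adj] at hj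
        obtain ⟨hne, hj⟩ := hj
        rcases hj with (⟨u', v', hu', hv', huv'⟩ | h') | (⟨u', v', hu', hv', huv'⟩ | h') <;>
          first
          | (cases hu'; cases hv'; first | exact huv' | exact huv'.symm)
          | simp_all

lemma cliqueNum_induce_nbhd {V : Type*} [Fintype V]
    (G : SimpleGraph V) (K : Finset V) (hK : G.IsNClique G.cliqueNum K)
    {x : V} (hx : x ∈ K) :
    (G.induce (G.neighborSet x)).cliqueNum = G.cliqueNum - 1 := by
  classical
  haveI : Fintype ↥(G.neighborSet x) := Fintype.ofFinite _
  have hxK : 1 ≤ G.cliqueNum := by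
    rw [← hK.card_eq]; exact Finset.card_pos.mpr ⟨x, hx⟩
  apply le_antisymm
  · obtain ⟨s, hs⟩ := (G.induce (G.neighborSet x)).exists_isNClique_cliqueNum
    have hclique : G.IsClique (insert x (s.image (Subtype.val)) : Finset V) := by
      intro a ha b hb hab
      simp only [Finset.coe_insert, Set.mem_insert_iff, Finset.coe_image,
        Set.mem_image, Finset.mem_coe] at ha hb
      rcases ha with rfl | ⟨a', ha', rfl⟩
      · rcases hb with rfl | ⟨b', hb', rfl⟩
        · exact absurd rfl hab
        · exact b'.2
      · rcases hb with rfl | ⟨b', hb', rfl⟩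
        · exact G.adj_symm a'.2
        · exact hs.isClique ha' hb' (fun h => hab (congrArg _ h))
    have hcard : (insert x (s.image Subtype.val)).card
        = (G.induce (G.neighborSet x)).cliqueNum + 1 := by
      rw [Finset.card_insert_of_notMem, Finset.card_image_of_injective _ Subtype.val_injective,
        hs.card_eq]
      intro hmem
      obtain ⟨a', _, ha'⟩ := Finset.mem_image.mp hmem
      have := a'.2; rw [ha'] at this
      exact G.notMem_neighborSet_self this
    have hle := SimpleGraph.IsClique.card_le_cliqueNum (tc := hclique)
    rw [hcard] at hle
    omega
  · set s : Finset ↥(G.neighborSet x) := (K.erase x).subtype (· ∈ G.neighborSet x) with hsdef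
    have hsub : ∀ y ∈ K.erase x, y ∈ G.neighborSet x := by
      intro y hy
      exact hK.isClique hx (Finset.mem_of_mem_erase hy)
        (fun h => (Finset.ne_of_mem_erase hy) h.symm)
    have hscard : s.card = G.cliqueNum - 1 := by
      rw [hsdef, Finset.card_subtype, Finset.filter_true_of_mem hsub,
        Finset.card_erase_of_mem hx, hK.card_eq]
    have hsclique : (G.induce (G.neighborSet x)).IsClique s := by
      intro a ha b hb hab
      simp only [hsdef, Finset.mem_coe, Finset.mem_subtype] at ha hb
      exact hK.isClique (Finset.mem_of_mem_erase ha) (Finset.mem_of_mem_erase hb)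
        (fun h => hab (Subtype.ext h))
    have := SimpleGraph.IsClique.card_le_cliqueNum (tc := hsclique)
    omega

lemma embed2K2' {V : Type*} {G : SimpleGraph V} {u v a b : V}
    (huv : G.Adj u v) (hab : G.Adj a b)
    (hua : ¬ G.Adj u a) (hub : ¬ G.Adj u b) (hva : ¬ G.Adj v a) (hvb : ¬ G.Adj v b)
    (hfree : IndFree graph2K2 G) : False := by
  apply hfree.false
  have h1 : u ≠ v := huv.ne
  have h2 : a ≠ b := hab.ne
  have h3 : u ≠ a := fun h => hva (h ▸ huv.symm)
  have h4 : u ≠ b := fun h => hvb (h ▸ huv.symm)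
  have h5 : v ≠ a := fun h => hua (h ▸ huv)
  have h6 : v ≠ b := fun h => hub (h ▸ huv)
  have hau : ¬ G.Adj a u := fun h => hua h.symm
  have hbu : ¬ G.Adj b u := fun h => hub h.symm
  have hav : ¬ G.Adj a v := fun h => hva h.symm
  have hbv : ¬ G.Adj b v := fun h => hvb h.symm
  refine ⟨⟨![u, v, a, b], ?_⟩, ?_⟩
  · intro i j hij
    fin_cases i <;> fin_cases j <;> simp_all [Matrix.cons_val_zero, Matrix.cons_val_one]
  · intro i j
    change G.Adj (![u, v, a, b] i) (![u, v, a, b] j) ↔ graph2K2.Adj i j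
    fin_cases i <;> fin_cases j <;>
      simp_all [graph2K2, SimpleGraph.fromRel_adj, Matrix.cons_val_zero, Matrix.cons_val_one,
        huv.symm, hab.symm, G.irrefl]

universe u v

/-- If every `(2K₂, H)`-free graph `G'` satisfies `χ(G') ≤ f(ω(G'))`,
then every `(2K₂, K₁ + H)`-free graph `G` with at least one edge satisfies
`χ(G) ≤ 2·f(ω(G) − 1) + 1`. -/
theorem stmt10 {W : Type v} (H : SimpleGraph W) (f : ℕ → ℕ)
    (hf : ∀ (V' : Type u) [Fintype V'] (G' : SimpleGraph V'),
      IndFree graph2K2 G' → IndFree H G' →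
        G'.chromaticNumber ≤ ((f G'.cliqueNum : ℕ) : ℕ∞))
    {V : Type u} [Fintype V] (G : SimpleGraph V)
    (h1 : IndFree graph2K2 G) (h2 : IndFree (joinK1 H) G)
    (he : ∃ u w : V, G.Adj u w) :
    G.chromaticNumber ≤ ((2 * f (G.cliqueNum - 1) + 1 : ℕ) : ℕ∞) := by
  classical
  obtain ⟨u0, w0, huw0⟩ := he
  obtain ⟨K, hK⟩ := G.exists_isNClique_cliqueNum
  have hω2 : 2 ≤ G.cliqueNum := by
    have h2c : G.IsClique ({u0, w0} : Finset V) := by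
      intro a ha b hb hab
      simp only [Finset.coe_insert, Set.mem_insert_iff, Finset.coe_singleton,
        Set.mem_singleton_iff] at ha hb
      rcases ha with rfl | rfl <;> rcases hb with rfl | rfl <;>
        first | exact absurd rfl hab | exact huw0 | exact huw0.symm
    have hle := SimpleGraph.IsClique.card_le_cliqueNum (tc := h2c)
    rwa [Finset.card_insert_of_notMem (by simp [huw0.ne]), Finset.card_singleton] at hle
  have hKcard : 1 < K.card := by rw [hK.card_eq]; exact hω2
  obtain ⟨u, hu, v, hv, huvne⟩ := Finset.one_lt_card.mp hKcard
  have huv : G.Adj u v := hK.isClique hu hv huvne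
  set k := f (G.cliqueNum - 1) with hk
  haveI : Fintype ↥(G.neighborSet u) := Fintype.ofFinite _
  haveI : Fintype ↥(G.neighborSet v) := Fintype.ofFinite _
  have hAχ := hf ↥(G.neighborSet u) (G.induce (G.neighborSet u))
    (indFree_induce' h1 _) (indFree_neighbor' h2 u)
  rw [cliqueNum_induce_nbhd G K hK hu] at hAχ
  have hBχ := hf ↥(G.neighborSet v) (G.induce (G.neighborSet v))
    (indFree_induce' h1 _) (indFree_neighbor' h2 v)
  rw [cliqueNum_induce_nbhd G K hK hv] at hBχ
  obtain ⟨CA⟩ : (G.induce (G.neighborSet u)).Colorable k :=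
    (SimpleGraph.chromaticNumber_le_iff_colorable).mp hAχ
  obtain ⟨CB⟩ : (G.induce (G.neighborSet v)).Colorable k :=
    (SimpleGraph.chromaticNumber_le_iff_colorable).mp hBχ
  let c : V → (Fin k ⊕ (Fin k ⊕ Unit)) := fun y =>
    if hy : y ∈ G.neighborSet u then Sum.inl (CA ⟨y, hy⟩)
    else if hy' : y ∈ G.neighborSet v then Sum.inr (Sum.inl (CB ⟨y, hy'⟩))
    else Sum.inr (Sum.inr ())
  have hcvalid : ∀ {a b : V}, G.Adj a b → c a ≠ c b := by
    intro a b hab hc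
    simp only [c] at hc
    split_ifs at hc
    all_goals first
      | exact CA.valid (by exact hab) hc
      | exact CA.valid (by exact hab) (Sum.inl_injective hc)
      | exact CB.valid (by exact hab) hc
      | exact CB.valid (by exact hab) (Sum.inl_injective (Sum.inr_injective hc))
      | exact embed2K2' huv hab
          (fun h => ‹a ∉ G.neighborSet u› ((G.mem_neighborSet u a).mpr h))
          (fun h => ‹b ∉ G.neighborSet u› ((G.mem_neighborSet u b).mpr h))
          (fun h => ‹a ∉ G.neighborSet v› ((G.mem_neighborSet v a).mpr h))
          (fun h => ‹b ∉ G.neighborSet v› ((G.mem_neighborSet v b).mpr h)) h1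
      | simp at hc
  have hcol := (SimpleGraph.Coloring.mk c hcvalid).colorable
  have hcard : Fintype.card (Fin k ⊕ (Fin k ⊕ Unit)) = 2 * k + 1 := by
    simp [Fintype.card_sum]; omega
  rw [hcard] at hcol
  exact (SimpleGraph.chromaticNumber_le_iff_colorable).mpr hcol
end

section
/- Let G be a graph and f : ℕ → ℕ. For each edge e = uv of G, let A(e) denote the set of vertices of G that are adjacent to neither u nor v. Suppose that for every edge e of G, the subgraph of G induced by A(e) has chromatic number at most f(ω(G)). Then χ(G) ≤ C(ω(G), 2)·f(ω(G)) + ω(G), where C(n, 2) = n(n−1)/2 is the binomial coefficient. -/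
open SimpleGraph

private lemma color_congr {V : Type*} {P : Type*} {A : P → Set V} {β : Type*}
    (F : ∀ p, ↥(A p) → β) {p q : P} (h : p = q)
    (y : V) (hy : y ∈ A q) (hy' : y ∈ A p) : F q ⟨y, hy⟩ = F p ⟨y, hy'⟩ := by
  subst h; rfl

/-- If for every edge `uv` of `G` the set `A(e)` of vertices adjacent
to neither `u` nor `v` induces a subgraph of chromatic number at most `f(ω(G))`,
then `χ(G) ≤ C(ω(G), 2)·f(ω(G)) + ω(G)`. -/
theorem stmt12 {V : Type*} [Fintype V] (G : SimpleGraph V) (f : ℕ → ℕ)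
    (hA : ∀ u v : V, G.Adj u v →
      (G.induce {x | ¬ G.Adj u x ∧ ¬ G.Adj v x}).chromaticNumber ≤
        ((f G.cliqueNum : ℕ) : ℕ∞)) :
    G.chromaticNumber ≤
      ((Nat.choose G.cliqueNum 2 * f G.cliqueNum + G.cliqueNum : ℕ) : ℕ∞) := by
  classical
  obtain ⟨K, hK⟩ := G.exists_isNClique_cliqueNum
  set ω := G.cliqueNum with hω
  set m := f ω with hm
  rw [chromaticNumber_le_iff_colorable]
  set A : Finset V → Set V := fun p => {y | ∀ w ∈ p, ¬ G.Adj w y} with hAdef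
  have hcol : ∀ p : {p // p ∈ K.powersetCard 2},
      Nonempty ((G.induce (A p.1)).Coloring (Fin m)) := by
    rintro ⟨p, hp⟩
    rw [Finset.mem_powersetCard] at hp
    obtain ⟨u, v, huv, rfl⟩ := Finset.card_eq_two.mp hp.2
    have hu : u ∈ K := hp.1 (by simp)
    have hv : v ∈ K := hp.1 (by simp)
    have hadj : G.Adj u v := hK.isClique hu hv huv
    have h1 := (chromaticNumber_le_iff_colorable.mp (hA u v hadj))
    have hset : A ({u, v} : Finset V) = {x | ¬ G.Adj u x ∧ ¬ G.Adj v x} := by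
      ext y; simp [hAdef]
    rw [hset]
    exact h1
  set Cp : ∀ p : {p // p ∈ K.powersetCard 2}, (G.induce (A p.1)).Coloring (Fin m) :=
    fun p => (hcol p).some with hCp
  set S : V → Finset V := fun x => K.filter (fun u => ¬ G.Adj u x) with hS
  have hSK : ∀ x, S x ⊆ K := fun x => Finset.filter_subset _ _
  have hSadj : ∀ x u, u ∈ S x → ¬ G.Adj u x := by
    intro x u hu; exact (Finset.mem_filter.mp hu).2
  have hScompl : ∀ x u, u ∈ K → u ∉ S x → G.Adj u x := by
    intro x u hu hus
    by_contra h
    exact hus (Finset.mem_filter.mpr ⟨hu, h⟩)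
  have hSne : ∀ x, x ∉ K → (S x).Nonempty := by
    intro x hx
    rw [Finset.nonempty_iff_ne_empty]
    intro hemp
    have hins : G.IsClique ((insert x K : Finset V) : Set V) := by
      intro a ha b hb hab
      simp only [Finset.coe_insert, Set.mem_insert_iff, Finset.mem_coe] at ha hb
      rcases ha with rfl | ha
      · rcases hb with rfl | hb
        · exact absurd rfl hab
        · exact ((hScompl a b hb (by simp [hemp])).symm)
      · rcases hb with rfl | hb
        · exact (hScompl b a ha (by simp [hemp]))
        · exact hK.isClique ha hb hab
    have hcard : (insert x K).card = ω + 1 := by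
      rw [Finset.card_insert_of_notMem hx, hK.2]
    have hle := @SimpleGraph.IsClique.card_le_cliqueNum _ G _ _ hins
    rw [← hω] at hle
    omega
  have hOne : ∀ x, x ∉ K → (S x).card = 1 → ∃ a, S x = {a} := by
    intro x _ h1; exact Finset.card_eq_one.mp h1
  choose vtx hvtx using hOne
  have hvK : ∀ x (hx : x ∉ K) (h1 : (S x).card = 1), vtx x hx h1 ∈ K := by
    intro x hx h1
    exact hSK x (by rw [hvtx x hx h1]; simp)
  have hvS : ∀ x (hx : x ∉ K) (h1 : (S x).card = 1), ¬ G.Adj (vtx x hx h1) x := by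
    intro x hx h1
    exact hSadj x _ (by rw [hvtx x hx h1]; simp)
  have hvadj : ∀ x (hx : x ∉ K) (h1 : (S x).card = 1) u, u ∈ K → u ≠ vtx x hx h1 →
      G.Adj u x := by
    intro x hx h1 u hu hne
    refine hScompl x u hu ?_
    rw [hvtx x hx h1]; simp [hne]
  have hTwo : ∀ x, x ∉ K → (S x).card ≠ 1 → ∃ p, p ⊆ S x ∧ p.card = 2 := by
    intro x hx h1
    refine Finset.exists_subset_card_eq ?_
    have := Finset.card_pos.mpr (hSne x hx)
    omega
  choose P hPsub hPcard using hTwo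
  have hPmem : ∀ x (hx : x ∉ K) (h1 : (S x).card ≠ 1), P x hx h1 ∈ K.powersetCard 2 := by
    intro x hx h1
    rw [Finset.mem_powersetCard]
    exact ⟨(hPsub x hx h1).trans (hSK x), hPcard x hx h1⟩
  have hPA : ∀ x (hx : x ∉ K) (h1 : (S x).card ≠ 1), x ∈ A (P x hx h1) := by
    intro x hx h1 w hw
    exact hSadj x w (hPsub x hx h1 hw)
  set col : V → ({p // p ∈ K.powersetCard 2} × Fin m) ⊕ {u // u ∈ K} := fun x =>
    if hx : x ∈ K then Sum.inr ⟨x, hx⟩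
    else if h1 : (S x).card = 1 then Sum.inr ⟨vtx x hx h1, hvK x hx h1⟩
    else Sum.inl (⟨P x hx h1, hPmem x hx h1⟩,
      Cp ⟨P x hx h1, hPmem x hx h1⟩ ⟨x, hPA x hx h1⟩) with hcoldef
  have hvalid : ∀ ⦃x y : V⦄, G.Adj x y → col x ≠ col y := by
    intro x y hadj heq
    have hxy : x ≠ y := G.ne_of_adj hadj
    simp only [hcoldef] at heq
    by_cases hx : x ∈ K <;> by_cases hy : y ∈ K
    · rw [dif_pos hx, dif_pos hy] at heq
      exact hxy (by simpa using heq)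
    · rw [dif_pos hx, dif_neg hy] at heq
      by_cases h1 : (S y).card = 1
      · rw [dif_pos h1] at heq
        have h2 : x = vtx y hy h1 := by simpa using heq
        exact hvS y hy h1 (h2 ▸ hadj)
      · rw [dif_neg h1] at heq
        exact nomatch heq
    · rw [dif_neg hx, dif_pos hy] at heq
      by_cases h1 : (S x).card = 1
      · rw [dif_pos h1] at heq
        have h2 : vtx x hx h1 = y := by simpa using heq
        exact hvS x hx h1 (h2 ▸ hadj.symm)
      · rw [dif_neg h1] at heq
        exact nomatch heq
    · rw [dif_neg hx, dif_neg hy] at heq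
      by_cases h1 : (S x).card = 1 <;> by_cases h2 : (S y).card = 1
      · rw [dif_pos h1, dif_pos h2] at heq
        have hveq : vtx x hx h1 = vtx y hy h2 := by simpa using heq
        set w := vtx x hx h1 with hw
        have hwK : w ∈ K := hvK x hx h1
        have key : ∀ c, c ∈ K → c ≠ w → G.Adj c x ∧ G.Adj c y := by
          intro c hc hcw
          exact ⟨hvadj x hx h1 c hc hcw,
            hvadj y hy h2 c hc (by rw [← hveq]; exact hcw)⟩
        have hins : G.IsClique ((insert x (insert y (K.erase w)) : Finset V) : Set V) := by
          intro a ha b hb hab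
          simp only [Finset.coe_insert, Set.mem_insert_iff, Finset.mem_coe,
            Finset.mem_erase] at ha hb
          rcases ha with rfl | rfl | ha
          · rcases hb with rfl | rfl | hb
            · exact absurd rfl hab
            · exact hadj
            · exact ((key b hb.2 hb.1).1).symm
          · rcases hb with rfl | rfl | hb
            · exact hadj.symm
            · exact absurd rfl hab
            · exact ((key b hb.2 hb.1).2).symm
          · rcases hb with rfl | rfl | hb
            · exact (key a ha.2 ha.1).1
            · exact (key a ha.2 ha.1).2
            · exact hK.isClique ha.2 hb.2 hab
        have hxK' : x ∉ insert y (K.erase w) := by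
          simp only [Finset.mem_insert, Finset.mem_erase]
          push_neg
          exact ⟨hxy, fun _ => hx⟩
        have hyK' : y ∉ K.erase w := fun h => hy (Finset.mem_erase.mp h).2
        have hcard : (insert x (insert y (K.erase w))).card = ω + 1 := by
          rw [Finset.card_insert_of_notMem hxK', Finset.card_insert_of_notMem hyK',
            Finset.card_erase_of_mem hwK, hK.2]
          have hω1 : 1 ≤ ω := by
            have := Finset.card_pos.mpr ⟨w, hwK⟩
            rw [hK.2] at this
            omega
          omega
        have hle := @SimpleGraph.IsClique.card_le_cliqueNum _ G _ _ hins
        rw [← hω] at hle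
        omega
      · rw [dif_pos h1, dif_neg h2] at heq
        exact nomatch heq
      · rw [dif_neg h1, dif_pos h2] at heq
        exact nomatch heq
      · rw [dif_neg h1, dif_neg h2] at heq
        rw [Sum.inl.injEq, Prod.mk.injEq] at heq
        obtain ⟨hpq, hc⟩ := heq
        have hyA : y ∈ A (P x hx h1) := by
          have h3 : P x hx h1 = P y hy h2 := congrArg Subtype.val hpq
          rw [h3]; exact hPA y hy h2
        have hc2 : Cp ⟨P y hy h2, hPmem y hy h2⟩ ⟨y, hPA y hy h2⟩ =
            Cp ⟨P x hx h1, hPmem x hx h1⟩ ⟨y, hyA⟩ :=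
          color_congr (fun p => ⇑(Cp p)) hpq y _ _
        rw [hc2] at hc
        have hadj' : (G.induce (A (P x hx h1))).Adj ⟨x, hPA x hx h1⟩ ⟨y, hyA⟩ := by
          simpa using hadj
        exact (Cp ⟨P x hx h1, hPmem x hx h1⟩).valid hadj' hc
  have C : G.Coloring (({p // p ∈ K.powersetCard 2} × Fin m) ⊕ {u // u ∈ K}) :=
    SimpleGraph.Coloring.mk col (fun {v w} h => hvalid h)
  have hres := C.colorable
  have hcard : Fintype.card (({p // p ∈ K.powersetCard 2} × Fin m) ⊕ {u // u ∈ K}) =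
      Nat.choose ω 2 * m + ω := by
    rw [Fintype.card_sum, Fintype.card_prod, Fintype.card_coe, Fintype.card_coe,
      Fintype.card_fin, Finset.card_powersetCard, hK.2]
  rw [hcard] at hres
  exact hres
end

section
/- Let G be a 2K2-free graph. Then χ(G) ≤ C(ω(G)+1, 2) = ω(G)(ω(G)+1)/2. -/
open SimpleGraph

instance : DecidableRel graph2K2.Adj := fun a b =>
  decidable_of_iff _ (SimpleGraph.fromRel_adj _ a b).symm

/-- Every `2K₂`-free graph `G` satisfies `χ(G) ≤ C(ω(G)+1, 2)`. -/
theorem stmt13 {V : Type*} [Fintype V] (G : SimpleGraph V)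
    (h1 : IndFree graph2K2 G) :
    G.chromaticNumber ≤ ((Nat.choose (G.cliqueNum + 1) 2 : ℕ) : ℕ∞) := by
  classical
  set ω := G.cliqueNum with hw
  obtain ⟨K, hK⟩ := G.exists_isNClique_cliqueNum
  have hcard : K.card = ω := hK.card_eq
  have e : ↥K ≃ Fin ω := Fintype.equivFinOfCardEq (by rw [Fintype.card_coe, hcard])
  set f : Fin ω → V := fun i => ((e.symm i : ↥K) : V) with hfdef
  have hfK : ∀ i, f i ∈ K := fun i => (e.symm i).2
  have hfinj : Function.Injective f := fun i j h => by
    have := Subtype.ext (p := fun x => x ∈ K) h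
    simpa using e.symm.injective this
  have hrep : ∀ x ∈ K, ∃ i, f i = x := fun x hx => ⟨e ⟨x, hx⟩, by simp [hfdef]⟩
  have hadjc : ∀ i j, i ≠ j → G.Adj (f i) (f j) := fun i j hij =>
    hK.isClique (hfK i) (hfK j) (fun h => hij (hfinj h))
  set N : V → Finset (Fin ω) := fun v => Finset.univ.filter fun i => ¬ G.Adj v (f i)
    with hNdef
  have hmemN : ∀ v i, i ∈ N v ↔ ¬ G.Adj v (f i) := by
    intro v i; simp [hNdef]
  -- nonemptiness of the non-neighbor sets
  have hNne : ∀ v, (N v).Nonempty := by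
    intro v
    by_contra h
    rw [Finset.not_nonempty_iff_eq_empty, Finset.eq_empty_iff_forall_notMem] at h
    have hadj : ∀ i, G.Adj v (f i) := fun i => by
      have := h i; rw [hmemN] at this; exact not_not.mp this
    have hvK : v ∉ K := by
      intro hv
      obtain ⟨i, hi⟩ := hrep v hv
      exact G.loopless.irrefl v (hi ▸ hadj i)
    have hclq : G.IsClique (insert v K : Finset V) := by
      rw [Finset.coe_insert]
      refine hK.isClique.insert (fun b hb hbv => ?_)
      obtain ⟨i, rfl⟩ := hrep b hb
      exact hadj i
    have hle := IsClique.card_le_cliqueNum (tc := hclq)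
    rw [Finset.card_insert_of_notMem hvK, hcard] at hle
    omega
  -- two key impossibility claims
  have claimDiag : ∀ u v a, G.Adj u v → N u = {a} → N v = {a} → False := by
    intro u v a huv hNu hNv
    have hω1 : 1 ≤ ω := lt_of_le_of_lt (Nat.zero_le _) a.isLt
    have hadju : ∀ j, j ≠ a → G.Adj u (f j) := fun j hj => by
      have : j ∉ N u := by rw [hNu]; simpa using hj
      rw [hmemN] at this; exact not_not.mp this
    have hadjv : ∀ j, j ≠ a → G.Adj v (f j) := fun j hj => by
      have : j ∉ N v := by rw [hNv]; simpa using hj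
      rw [hmemN] at this; exact not_not.mp this
    have hue : u ∉ K.erase (f a) := by
      intro hu
      obtain ⟨j, rfl⟩ := hrep u (Finset.mem_of_mem_erase hu)
      have hja : j ≠ a := fun h => (Finset.ne_of_mem_erase hu) (by rw [h])
      exact G.loopless.irrefl _ (hadju j hja)
    have hve : v ∉ K.erase (f a) := by
      intro hv
      obtain ⟨j, rfl⟩ := hrep v (Finset.mem_of_mem_erase hv)
      have hja : j ≠ a := fun h => (Finset.ne_of_mem_erase hv) (by rw [h])
      exact G.loopless.irrefl _ (hadjv j hja)
    have huv' : u ≠ v := huv.ne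
    have hclq : G.IsClique (insert u (insert v (K.erase (f a))) : Finset V) := by
      intro x hx y hy hxy
      simp only [Finset.coe_insert, Set.mem_insert_iff, Finset.mem_coe,
        Finset.mem_erase] at hx hy
      have hadjKe : ∀ z ∈ K.erase (f a), ∀ w, (∀ j, j ≠ a → G.Adj w (f j)) → G.Adj w z := by
        intro z hz w hw
        obtain ⟨j, rfl⟩ := hrep z (Finset.mem_of_mem_erase hz)
        exact hw j (fun h => (Finset.ne_of_mem_erase hz) (by rw [h]))
      rcases hx with rfl | rfl | ⟨hxa, hxK⟩
      · rcases hy with rfl | rfl | ⟨hya, hyK⟩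
        · exact absurd rfl hxy
        · exact huv
        · exact hadjKe y (Finset.mem_erase.mpr ⟨hya, hyK⟩) x hadju
      · rcases hy with rfl | rfl | ⟨hya, hyK⟩
        · exact huv.symm
        · exact absurd rfl hxy
        · exact hadjKe y (Finset.mem_erase.mpr ⟨hya, hyK⟩) x hadjv
      · rcases hy with rfl | rfl | ⟨hya, hyK⟩
        · exact (hadjKe x (Finset.mem_erase.mpr ⟨hxa, hxK⟩) y hadju).symm
        · exact (hadjKe x (Finset.mem_erase.mpr ⟨hxa, hxK⟩) y hadjv).symm
        · exact hK.isClique hxK hyK hxy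
    have hle := IsClique.card_le_cliqueNum (tc := hclq)
    have hnm : u ∉ insert v (K.erase (f a)) := by
      simp only [Finset.mem_insert]; push_neg; exact ⟨huv', hue⟩
    rw [Finset.card_insert_of_notMem hnm, Finset.card_insert_of_notMem hve,
      Finset.card_erase_of_mem (hfK a), hcard] at hle
    omega
  have claimPair : ∀ u v a b, G.Adj u v → a ≠ b →
      a ∈ N u → b ∈ N u → a ∈ N v → b ∈ N v → False := by
    intro u v a b huv hab hau hbu hav hbv
    rw [hmemN] at hau hbu hav hbv
    have hfab : G.Adj (f a) (f b) := hadjc a b hab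
    have hufa : u ≠ f a := fun h => hbu (h ▸ hfab)
    have hufb : u ≠ f b := fun h => hau (h ▸ hfab.symm)
    have hvfa : v ≠ f a := fun h => hbv (h ▸ hfab)
    have hvfb : v ≠ f b := fun h => hav (h ▸ hfab.symm)
    have huv' : u ≠ v := huv.ne
    have hfafb : f a ≠ f b := hfab.ne
    have hau' : ¬ G.Adj (f a) u := fun h => hau h.symm
    have hbu' : ¬ G.Adj (f b) u := fun h => hbu h.symm
    have hav' : ¬ G.Adj (f a) v := fun h => hav h.symm
    have hbv' : ¬ G.Adj (f b) v := fun h => hbv h.symm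
    have emb : graph2K2 ↪g G := by
      refine ⟨⟨![u, v, f a, f b], ?_⟩, ?_⟩
      · intro x y hxy
        fin_cases x <;> fin_cases y <;>
          first
            | rfl
            | exact absurd hxy huv'
            | exact absurd hxy huv'.symm
            | exact absurd hxy hufa
            | exact absurd hxy hufa.symm
            | exact absurd hxy hufb
            | exact absurd hxy hufb.symm
            | exact absurd hxy hvfa
            | exact absurd hxy hvfa.symm
            | exact absurd hxy hvfb
            | exact absurd hxy hvfb.symm
            | exact absurd hxy hfafb
            | exact absurd hxy hfafb.symm
      · intro x y
        fin_cases x <;> fin_cases y <;>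
          first
            | exact iff_of_false (G.loopless.irrefl _) (by decide)
            | exact iff_of_true huv (by decide)
            | exact iff_of_true huv.symm (by decide)
            | exact iff_of_true hfab (by decide)
            | exact iff_of_true hfab.symm (by decide)
            | exact iff_of_false hau (by decide)
            | exact iff_of_false hbu (by decide)
            | exact iff_of_false hav (by decide)
            | exact iff_of_false hbv (by decide)
            | exact iff_of_false hau' (by decide)
            | exact iff_of_false hbu' (by decide)
            | exact iff_of_false hav' (by decide)
            | exact iff_of_false hbv' (by decide)
    exact h1.false emb
  -- the coloring
  have C : G.Coloring (Sym2 (Fin ω)) := by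
    refine Coloring.mk
      (fun v => if h : ((N v).erase ((N v).min' (hNne v))).Nonempty
        then s((N v).min' (hNne v), ((N v).erase ((N v).min' (hNne v))).min' h)
        else s((N v).min' (hNne v), (N v).min' (hNne v))) ?_
    intro u v huv heq
    beta_reduce at heq
    have hmu := Finset.min'_mem (N u) (hNne u)
    have hmv := Finset.min'_mem (N v) (hNne v)
    split_ifs at heq with h2 h3 h4
    · -- both nondiagonal
      have hmu2 := Finset.min'_mem _ h2
      have hmv2 := Finset.min'_mem _ h3
      have hneu := Finset.ne_of_mem_erase hmu2
      have hnev := Finset.ne_of_mem_erase hmv2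
      have hmu2' := Finset.mem_of_mem_erase hmu2
      have hmv2' := Finset.mem_of_mem_erase hmv2
      rw [Sym2.eq_iff] at heq
      rcases heq with ⟨h5, h6⟩ | ⟨h5, h6⟩
      · exact claimPair u v _ _ huv (Ne.symm hneu) hmu hmu2' (h5 ▸ hmv) (h6 ▸ hmv2')
      · exact claimPair u v _ _ huv (Ne.symm hneu) hmu hmu2' (h5 ▸ hmv2') (h6 ▸ hmv)
    · rw [Sym2.eq_iff] at heq
      have : ((N u).erase ((N u).min' (hNne u))).min' h2 = (N u).min' (hNne u) := by
        rcases heq with ⟨h5, h6⟩ | ⟨h5, h6⟩ <;> first | exact h6.trans h5.symm | exact h5.trans h6.symm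
      exact (Finset.ne_of_mem_erase (Finset.min'_mem _ h2)) this
    · rw [Sym2.eq_iff] at heq
      have : ((N v).erase ((N v).min' (hNne v))).min' h4 = (N v).min' (hNne v) := by
        rcases heq with ⟨h5, h6⟩ | ⟨h5, h6⟩ <;> first | exact h6.symm.trans h5 | exact h5.symm.trans h6
      exact (Finset.ne_of_mem_erase (Finset.min'_mem _ h4)) this
    · -- both diagonal
      rw [Sym2.eq_iff] at heq
      have hab : (N u).min' (hNne u) = (N v).min' (hNne v) := by tauto
      rw [Finset.not_nonempty_iff_eq_empty, Finset.erase_eq_empty_iff] at h2 h4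
      have hNu : N u = {(N u).min' (hNne u)} := by
        rcases h2 with h | h
        · exact absurd h (Finset.nonempty_iff_ne_empty.mp (hNne u))
        · exact h
      have hNv : N v = {(N v).min' (hNne v)} := by
        rcases h4 with h | h
        · exact absurd h (Finset.nonempty_iff_ne_empty.mp (hNne v))
        · exact h
      exact claimDiag u v _ huv hNu (hab ▸ hNv)
  have hcol : G.Colorable (Fintype.card (Sym2 (Fin ω))) := C.colorable
  have hcc : Fintype.card (Sym2 (Fin ω)) = Nat.choose (ω + 1) 2 := by
    rw [Sym2.card, Fintype.card_fin]
  rw [hcc] at hcol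
  exact hcol.chromaticNumber_le
end

section
/- Let G be a graph such that for every edge e = uv of G, the set A(e) of vertices adjacent to neither u nor v induces a perfect subgraph of G. Then χ(G) ≤ (ω(G)³ − ω(G)² + 2·ω(G)) / 2. -/
open SimpleGraph

lemma cliqueNum_le_of_emb {α β : Type*} [Fintype α] [Fintype β]
    {A : SimpleGraph α} {B : SimpleGraph β} (f : A ↪g B) :
    A.cliqueNum ≤ B.cliqueNum := by
  classical
  obtain ⟨s, hs⟩ := A.exists_isNClique_cliqueNum
  have hc : B.IsClique (s.map f.toEmbedding) := by
    intro x hx y hy hxy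
    simp only [Finset.coe_map, Set.mem_image, Finset.mem_coe] at hx hy
    obtain ⟨a, ha, rfl⟩ := hx
    obtain ⟨b, hb, rfl⟩ := hy
    exact f.map_adj_iff.2 (hs.1 ha hb (fun h => hxy (by rw [h])))
  calc A.cliqueNum = (s.map f.toEmbedding).card := by rw [Finset.card_map, hs.2]
    _ ≤ B.cliqueNum := IsClique.card_le_cliqueNum (tc := hc)

lemma colorable_of_perfect {V : Type*} [Fintype V] (G : SimpleGraph V) (A : Set V)
    (hP : IsPerfect (G.induce A)) : (G.induce A).Colorable G.cliqueNum := by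
  classical
  rw [← chromaticNumber_le_iff_colorable]
  have h1 := hP Set.univ
  have e := (G.induce A).induceUnivIso
  have c1 : (G.induce A).chromaticNumber ≤ ((G.induce A).induce Set.univ).chromaticNumber :=
    chromaticNumber_mono_of_hom e.symm.toEmbedding.toHom
  have c2 : ((G.induce A).induce Set.univ).cliqueNum ≤ G.cliqueNum :=
    le_trans (cliqueNum_le_of_emb e.toEmbedding)
      (cliqueNum_le_of_emb (SimpleGraph.Embedding.induce A))
  calc (G.induce A).chromaticNumber ≤ _ := c1
    _ = _ := h1
    _ ≤ (G.cliqueNum : ℕ∞) := by exact_mod_cast c2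

lemma arith_bound (n : ℕ) : n + n.choose 2 * n ≤ (n ^ 3 - n ^ 2 + 2 * n) / 2 := by
  cases n with
  | zero => simp
  | succ m =>
    obtain ⟨k, hk⟩ := Nat.even_mul_succ_self m
    have hk2 : m * (m + 1) = 2 * k := by omega
    have hch : (m + 1).choose 2 = k := by
      rw [Nat.choose_two_right]
      have : (m + 1) * (m + 1 - 1) = 2 * k := by rw [Nat.mul_comm]; simpa using hk2
      rw [this]; omega
    have hcube : (m + 1) ^ 3 - (m + 1) ^ 2 + 2 * (m + 1) = 2 * (k * (m + 1) + (m + 1)) := by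
      have key : (m + 1) ^ 3 = (m + 1) ^ 2 + 2 * (k * (m + 1)) := by
        calc (m + 1) ^ 3 = (m + 1) ^ 2 + (m * (m + 1)) * (m + 1) := by ring
          _ = (m + 1) ^ 2 + 2 * (k * (m + 1)) := by rw [hk2]; ring
      rw [key, Nat.add_sub_cancel_left]; ring
    rw [hch, hcube, Nat.mul_div_cancel_left _ (by norm_num)]
    have : k * (m+1) = (m+1) * k := Nat.mul_comm _ _
    omega

/-- If for every edge `uv` of `G` the set of vertices adjacent to
neither `u` nor `v` induces a perfect subgraph, then
`χ(G) ≤ (ω(G)³ − ω(G)² + 2ω(G))/2`. -/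
theorem stmt14 {V : Type*} [Fintype V] (G : SimpleGraph V)
    (hA : ∀ u v : V, G.Adj u v →
      IsPerfect (G.induce {x | ¬ G.Adj u x ∧ ¬ G.Adj v x})) :
    G.chromaticNumber ≤
      (((G.cliqueNum ^ 3 - G.cliqueNum ^ 2 + 2 * G.cliqueNum) / 2 : ℕ) : ℕ∞) := by
  classical
  obtain ⟨K, hK⟩ := G.exists_isNClique_cliqueNum
  set ω := G.cliqueNum with hω
  rw [chromaticNumber_le_iff_colorable]
  rcases Nat.eq_zero_or_pos ω with hω0 | hω0
  · -- ω = 0 : V is empty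
    have : IsEmpty V := by
      by_contra h
      rw [not_isEmpty_iff] at h
      obtain ⟨x⟩ := h
      have := IsClique.card_le_cliqueNum (G := G) (t := {x})
        (tc := by simp [SimpleGraph.isClique_singleton])
      rw [← hω] at this
      simp at this
      omega
    exact (Colorable.of_isEmpty (G := G) 0).mono (Nat.zero_le _)
  -- main case
  let KS := {x : V // x ∈ K}
  let Pairs := {p : Sym2 KS // ¬ p.IsDiag}
  let Aset : Pairs → Set V := fun p => {x | ∀ u ∈ p.1, ¬ G.Adj (u : V) x}
  have hcol : ∀ p : Pairs, (G.induce (Aset p)).Colorable ω := by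
    rintro ⟨p, hp⟩
    revert hp
    refine Sym2.ind (fun a b => ?_) p
    intro hp
    have hab : a ≠ b := fun h => hp (by simp [h])
    have hadj : G.Adj (a : V) (b : V) :=
      hK.1 a.2 b.2 (fun h => hab (Subtype.ext h))
    have hset : Aset ⟨s(a, b), hp⟩ = {x | ¬ G.Adj (a : V) x ∧ ¬ G.Adj (b : V) x} := by
      ext x
      simp only [Aset, Set.mem_setOf_eq, Sym2.mem_iff]
      constructor
      · intro h; exact ⟨h a (Or.inl rfl), h b (Or.inr rfl)⟩
      · rintro ⟨h1, h2⟩ u (rfl | rfl) <;> assumption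
    rw [hset]
    exact colorable_of_perfect G _ (hA _ _ hadj)
  let coloring : ∀ p : Pairs, (G.induce (Aset p)).Coloring (Fin ω) :=
    fun p => (hcol p).some
  let g : Pairs → V → Fin ω := fun p x =>
    if h : x ∈ Aset p then coloring p ⟨x, h⟩ else ⟨0, hω0⟩
  -- classification of vertices not in any A-set
  have hclass : ∀ x : V, (¬ ∃ p : Pairs, x ∈ Aset p) →
      ∃ u : KS, x = (u : V) ∨
        (x ∉ K ∧ ¬ G.Adj (u : V) x ∧ ∀ w ∈ K, w ≠ (u : V) → G.Adj w x) := by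
    intro x hx
    by_cases hxK : x ∈ K
    · exact ⟨⟨x, hxK⟩, Or.inl rfl⟩
    · have h1 : ∃ u ∈ K, ¬ G.Adj u x := by
        by_contra h
        push_neg at h
        have hcl : G.IsClique (insert x (K : Set V)) :=
          hK.1.insert (fun y hy hne => (h y hy).symm)
        have hco : ((insert x K : Finset V) : Set V) = insert x (K : Set V) := by simp
        have hle := IsClique.card_le_cliqueNum (G := G) (t := insert x K)
          (tc := by rw [hco]; exact hcl)
        rw [Finset.card_insert_of_notMem hxK, hK.2, ← hω] at hle
        omega
      obtain ⟨u, huK, hux⟩ := h1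
      refine ⟨⟨u, huK⟩, Or.inr ⟨hxK, hux, ?_⟩⟩
      intro w hwK hwu
      by_contra hwx
      have hdiag : ¬ (s(⟨u, huK⟩, ⟨w, hwK⟩) : Sym2 KS).IsDiag := by
        simp only [Sym2.isDiag_iff_proj_eq]
        exact fun h => hwu (congrArg Subtype.val h.symm)
      refine hx ⟨⟨s(⟨u, huK⟩, ⟨w, hwK⟩), hdiag⟩, ?_⟩
      intro z hz
      simp only [Sym2.mem_iff] at hz
      rcases hz with rfl | rfl
      · exact hux
      · exact hwx
  -- the coloring function
  let C := KS ⊕ (Pairs × Fin ω)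
  let f : V → C := fun x =>
    if h : ∃ p : Pairs, x ∈ Aset p then
      Sum.inr (h.choose, g h.choose x)
    else Sum.inl (hclass x h).choose
  have hvalid : ∀ {x y : V}, G.Adj x y → f x ≠ f y := by
    intro x y hxy heq
    simp only [f] at heq
    by_cases hx : ∃ p : Pairs, x ∈ Aset p <;> by_cases hy : ∃ p : Pairs, y ∈ Aset p
    · rw [dif_pos hx, dif_pos hy] at heq
      injection heq with h'
      obtain ⟨h1, h2⟩ := Prod.mk.inj h'
      rw [← h1] at h2
      have hxA : x ∈ Aset hx.choose := hx.choose_spec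
      have hyA : y ∈ Aset hx.choose := h1 ▸ hy.choose_spec
      rw [show g hx.choose x = coloring hx.choose ⟨x, hxA⟩ from dif_pos hxA,
        show g hx.choose y = coloring hx.choose ⟨y, hyA⟩ from dif_pos hyA] at h2
      have hadj : (G.induce (Aset hx.choose)).Adj ⟨x, hxA⟩ ⟨y, hyA⟩ := by
        simp only [comap_adj, Function.Embedding.coe_subtype]
        exact hxy
      exact (coloring hx.choose).valid hadj h2
    · rw [dif_pos hx, dif_neg hy] at heq; exact Sum.inr_ne_inl heq
    · rw [dif_neg hx, dif_pos hy] at heq; exact Sum.inl_ne_inr heq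
    · rw [dif_neg hx, dif_neg hy] at heq
      injection heq with heq
      set u := (hclass x hx).choose with hu
      have hsx := (hclass x hx).choose_spec
      have hsy := (hclass y hy).choose_spec
      rw [← heq] at hsy
      rcases hsx with h1 | ⟨hxK, hux, hallx⟩ <;> rcases hsy with h2 | ⟨hyK, huy, hally⟩
      · exact G.ne_of_adj hxy (h1.trans h2.symm)
      · exact huy (h1 ▸ hxy)
      · exact hux (h2 ▸ hxy.symm)
      · have hne : x ≠ y := G.ne_of_adj hxy
        have hxE : x ∉ K.erase (u : V) := fun h => hxK (Finset.mem_of_mem_erase h)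
        have hyE : y ∉ K.erase (u : V) := fun h => hyK (Finset.mem_of_mem_erase h)
        have hcl : G.IsClique ((insert x (insert y (K.erase (u : V))) : Finset V) : Set V) := by
          intro a ha b hb hab
          simp only [Finset.coe_insert, Set.mem_insert_iff, Finset.mem_coe,
            Finset.mem_erase] at ha hb
          rcases ha with rfl | rfl | ⟨hau, haK⟩ <;>
            rcases hb with rfl | rfl | ⟨hbu, hbK⟩
          · exact absurd rfl hab
          · exact hxy
          · exact (hallx b hbK hbu).symm
          · exact hxy.symm
          · exact absurd rfl hab
          · exact (hally b hbK hbu).symm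
          · exact hallx a haK hau
          · exact hally a haK hau
          · exact hK.1 haK hbK hab
        have hle := IsClique.card_le_cliqueNum (G := G)
          (t := insert x (insert y (K.erase (u : V)))) (tc := hcl)
        have hcard : (insert x (insert y (K.erase (u : V)))).card = ω + 1 := by
          rw [Finset.card_insert_of_notMem (by
            simp only [Finset.mem_insert]
            rintro (rfl | h)
            · exact hne rfl
            · exact hxE h),
            Finset.card_insert_of_notMem hyE,
            Finset.card_erase_of_mem u.2, hK.2]
          omega
        rw [hcard, ← hω] at hle
        omega
  let col : G.Coloring C := Coloring.mk f hvalid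
  have hcardC : Fintype.card C = ω + ω.choose 2 * ω := by
    have h1 : Fintype.card KS = ω := by
      rw [Fintype.card_coe, hK.2]
    have h2 : Fintype.card Pairs = ω.choose 2 := by
      rw [Sym2.card_subtype_not_diag, h1]
    simp only [C, Fintype.card_sum, Fintype.card_prod, Fintype.card_fin, h1, h2]
  have hc : G.Colorable (Fintype.card C) := col.colorable
  rw [hcardC] at hc
  exact hc.mono (arith_bound ω)
end

section
/- Let G be a (P2 ∪ P4)-free graph. Then χ(G) ≤ (ω(G)³ − ω(G)² + 2·ω(G)) / 2. -/
open SimpleGraph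

lemma IndFree.of_embedding {U V W : Type*} {H : SimpleGraph U} {G : SimpleGraph V}
    {G' : SimpleGraph W} (h : IndFree H G) (f : G' ↪g G) : IndFree H G' :=
  ⟨fun e => h.false (f.comp e)⟩

lemma p4_free_aux {V : Type*} {G : SimpleGraph V} (h : IndFree graphP4 G) {a b c d : V}
    (hab : G.Adj a b) (hbc : G.Adj b c) (hcd : G.Adj c d)
    (hac : ¬ G.Adj a c) (had : ¬ G.Adj a d) (hbd : ¬ G.Adj b d) : False := by
  have hca : ¬ G.Adj c a := fun h' => hac h'.symm
  have hda : ¬ G.Adj d a := fun h' => had h'.symm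
  have hdb : ¬ G.Adj d b := fun h' => hbd h'.symm
  have nab : a ≠ b := G.ne_of_adj hab
  have nbc : b ≠ c := G.ne_of_adj hbc
  have ncd : c ≠ d := G.ne_of_adj hcd
  have nac : a ≠ c := fun h' => had (h' ▸ hcd)
  have nad : a ≠ d := fun h' => hbd (h' ▸ hab).symm
  have nbd : b ≠ d := fun h' => had (h' ▸ hab)
  refine h.false ⟨⟨![a,b,c,d], ?_⟩, ?_⟩
  · intro i j hij
    fin_cases i <;> fin_cases j <;>
      simp_all [nab, nbc, ncd, nac, nad, nbd, nab.symm, nbc.symm, ncd.symm,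
        nac.symm, nad.symm, nbd.symm]
  · intro i j
    show G.Adj (![a,b,c,d] i) (![a,b,c,d] j) ↔ _
    fin_cases i <;> fin_cases j <;>
      simp [graphP4, SimpleGraph.fromRel_adj, hab, hbc, hcd, hac, had, hbd, hca, hda, hdb,
        hab.symm, hbc.symm, hcd.symm, nab, nbc, ncd, nac, nad, nbd,
        nab.symm, nbc.symm, ncd.symm, nac.symm, nad.symm, nbd.symm] <;>
      first | decide | exact fun h' => G.irrefl h'

set_option maxRecDepth 8000 in
/-- If `G` has an edge `u-v` and an induced path `a-b-c-d` with no edges between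
`{u,v}` and `{a,b,c,d}`, then `G` contains an induced `P₂ ∪ P₄`. -/
lemma p2p4_free_aux {V : Type*} {G : SimpleGraph V} (h : IndFree graphP2P4 G) {u v a b c d : V}
    (huv : G.Adj u v)
    (hab : G.Adj a b) (hbc : G.Adj b c) (hcd : G.Adj c d)
    (hac : ¬ G.Adj a c) (had : ¬ G.Adj a d) (hbd : ¬ G.Adj b d)
    (hua : ¬ G.Adj u a) (hub : ¬ G.Adj u b) (huc : ¬ G.Adj u c) (hud : ¬ G.Adj u d)
    (hva : ¬ G.Adj v a) (hvb : ¬ G.Adj v b) (hvc : ¬ G.Adj v c) (hvd : ¬ G.Adj v d) : False := by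
  have hca : ¬ G.Adj c a := fun h' => hac h'.symm
  have hda : ¬ G.Adj d a := fun h' => had h'.symm
  have hdb : ¬ G.Adj d b := fun h' => hbd h'.symm
  have hau : ¬ G.Adj a u := fun h' => hua h'.symm
  have hbu : ¬ G.Adj b u := fun h' => hub h'.symm
  have hcu : ¬ G.Adj c u := fun h' => huc h'.symm
  have hdu : ¬ G.Adj d u := fun h' => hud h'.symm
  have hav : ¬ G.Adj a v := fun h' => hva h'.symm
  have hbv : ¬ G.Adj b v := fun h' => hvb h'.symm
  have hcv : ¬ G.Adj c v := fun h' => hvc h'.symm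
  have hdv : ¬ G.Adj d v := fun h' => hvd h'.symm
  have nuv : u ≠ v := G.ne_of_adj huv
  have nab : a ≠ b := G.ne_of_adj hab
  have nbc : b ≠ c := G.ne_of_adj hbc
  have ncd : c ≠ d := G.ne_of_adj hcd
  have nac : a ≠ c := fun h' => had (h' ▸ hcd)
  have nad : a ≠ d := fun h' => hbd (h' ▸ hab).symm
  have nbd : b ≠ d := fun h' => had (h' ▸ hab)
  have nua : u ≠ a := fun h' => hav (h' ▸ huv)
  have nub : u ≠ b := fun h' => hbv (h' ▸ huv)
  have nuc : u ≠ c := fun h' => hcv (h' ▸ huv)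
  have nud : u ≠ d := fun h' => hdv (h' ▸ huv)
  have nva : v ≠ a := fun h' => hua (h' ▸ huv.symm).symm
  have nvb : v ≠ b := fun h' => hub (h' ▸ huv.symm).symm
  have nvc : v ≠ c := fun h' => huc (h' ▸ huv.symm).symm
  have nvd : v ≠ d := fun h' => hud (h' ▸ huv.symm).symm
  have e0 : (![u,v,a,b,c,d] : Fin 6 → V) 0 = u := rfl
  have e1 : (![u,v,a,b,c,d] : Fin 6 → V) 1 = v := rfl
  have e2 : (![u,v,a,b,c,d] : Fin 6 → V) 2 = a := rfl
  have e3 : (![u,v,a,b,c,d] : Fin 6 → V) 3 = b := rfl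
  have e4 : (![u,v,a,b,c,d] : Fin 6 → V) 4 = c := rfl
  have e5 : (![u,v,a,b,c,d] : Fin 6 → V) 5 = d := rfl
  refine h.false ⟨⟨![u,v,a,b,c,d], ?_⟩, ?_⟩
  · intro i j hij
    fin_cases i <;> fin_cases j <;>
      simp_all [e0, e1, e2, e3, e4, e5, nuv, nab, nbc, ncd, nac, nad, nbd, nua, nub, nuc, nud, nva, nvb, nvc, nvd,
        nuv.symm, nab.symm, nbc.symm, ncd.symm, nac.symm, nad.symm, nbd.symm,
        nua.symm, nub.symm, nuc.symm, nud.symm, nva.symm, nvb.symm, nvc.symm, nvd.symm]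
  · intro i j
    show G.Adj (![u,v,a,b,c,d] i) (![u,v,a,b,c,d] j) ↔ _
    fin_cases i <;> fin_cases j <;>
      simp [e0, e1, e2, e3, e4, e5, graphP2P4, SimpleGraph.fromRel_adj, huv, hab, hbc, hcd, hac, had, hbd,
        hca, hda, hdb, hua, hub, huc, hud, hva, hvb, hvc, hvd, hau, hbu, hcu, hdu,
        hav, hbv, hcv, hdv, huv.symm, hab.symm, hbc.symm, hcd.symm,
        nuv, nab, nbc, ncd, nac, nad, nbd, nua, nub, nuc, nud, nva, nvb, nvc, nvd,
        nuv.symm, nab.symm, nbc.symm, ncd.symm, nac.symm, nad.symm, nbd.symm,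
        nua.symm, nub.symm, nuc.symm, nud.symm, nva.symm, nvb.symm, nvc.symm, nvd.symm]

/-- A `P₄`-free graph whose cliques all have at most `k` vertices is `k`-colorable. -/
lemma p4free_colorable : ∀ (k : ℕ) {W : Type*} [Fintype W] (H : SimpleGraph W),
    IndFree graphP4 H → (∀ t : Finset W, H.IsClique (t : Set W) → t.card ≤ k) →
    H.Colorable k := by
  intro k
  induction k with
  | zero =>
    intro W _ H _ hcl
    have : IsEmpty W := by
      constructor
      intro v
      have := hcl {v} (by simp [SimpleGraph.isClique_iff])
      simp at this
    exact SimpleGraph.Colorable.of_isEmpty (G := H) 0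
  | succ k ih =>
    intro W _ H hP4 hcl
    classical
    cases isEmpty_or_nonempty W with
    | inl hE => exact SimpleGraph.Colorable.of_isEmpty (G := H) _
    | inr hNE =>
    -- take a maximum-cardinality independent set S
    obtain ⟨S, hSmem, hSmax⟩ := Finset.exists_max_image
      (Finset.univ.filter fun t : Finset W => (t : Set W).Pairwise fun a b => ¬ H.Adj a b)
      Finset.card ⟨∅, by simp⟩
    have hSind : (S : Set W).Pairwise fun a b => ¬ H.Adj a b := (Finset.mem_filter.1 hSmem).2
    have hSmax' : ∀ t : Finset W, ((t : Set W).Pairwise fun a b => ¬ H.Adj a b) →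
        t.card ≤ S.card := fun t ht =>
      hSmax t (Finset.mem_filter.2 ⟨Finset.mem_univ _, ht⟩)
    have hdom : ∀ v, v ∉ S → ∃ s ∈ S, H.Adj v s := by
      intro v hv
      by_contra hno
      push_neg at hno
      have hins : ((insert v S : Finset W) : Set W).Pairwise fun a b => ¬ H.Adj a b := by
        rw [Finset.coe_insert]
        refine hSind.insert ?_
        intro b hb hne
        exact ⟨hno b hb, fun h' => hno b hb h'.symm⟩
      have := hSmax' _ hins
      rw [Finset.card_insert_of_notMem hv] at this
      omega
    -- every clique avoiding S has at most k vertices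
    have hsmall : ∀ t : Finset W, H.IsClique (t : Set W) → (∀ x ∈ t, x ∉ S) → t.card ≤ k := by
      intro t ht hdisj
      by_contra hbig
      push_neg at hbig
      have htcard : t.card = k + 1 := le_antisymm (hcl t ht) hbig
      have hmax : ∀ t' : Finset W, H.IsClique (t' : Set W) → t'.card ≤ t.card := fun t' ht' =>
        htcard ▸ hcl t' ht'
      have htne : t.Nonempty := Finset.card_pos.1 (by omega)
      obtain ⟨c₀, hc₀⟩ := htne
      obtain ⟨s₀, hs₀S, hs₀⟩ := hdom c₀ (hdisj c₀ hc₀)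
      obtain ⟨s, hsS, hsdeg⟩ := Finset.exists_max_image S
        (fun s => (t.filter (H.Adj s)).card) ⟨s₀, hs₀S⟩
      have hsnott : s ∉ t := fun h' => hdisj s h' hsS
      have hex : ∃ c' ∈ t, ¬ H.Adj s c' := by
        by_contra hall
        push_neg at hall
        have hclq : H.IsClique ((insert s t : Finset W) : Set W) := by
          rw [Finset.coe_insert]
          exact ht.insert fun b hb _ => hall b hb
        have := hmax _ hclq
        rw [Finset.card_insert_of_notMem hsnott] at this
        omega
      obtain ⟨c', hc't, hsc'⟩ := hex
      obtain ⟨s', hs'S, hs'c'⟩ := hdom c' (hdisj c' hc't)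
      have hss' : s ≠ s' := fun h' => hsc' (h' ▸ hs'c'.symm)
      have hex2 : ∃ c ∈ t, H.Adj s c ∧ ¬ H.Adj s' c := by
        by_contra hall
        push_neg at hall
        have hsub : t.filter (H.Adj s) ⊆ t.filter (H.Adj s') := by
          intro x hx
          rw [Finset.mem_filter] at hx ⊢
          exact ⟨hx.1, hall x hx.1 hx.2⟩
        have hc'in : c' ∈ t.filter (H.Adj s') := Finset.mem_filter.2 ⟨hc't, hs'c'.symm⟩
        have hc'nin : c' ∉ t.filter (H.Adj s) := fun h' => hsc' (Finset.mem_filter.1 h').2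
        have hlt := Finset.card_lt_card ((Finset.ssubset_iff_of_subset hsub).2
          ⟨c', hc'in, hc'nin⟩)
        have := hsdeg s' hs'S
        omega
      obtain ⟨c, hct, hsc, hs'c⟩ := hex2
      have hcc' : c ≠ c' := fun h' => hsc' (h' ▸ hsc)
      have hadjcc' : H.Adj c c' := ht (Finset.mem_coe.2 hct) (Finset.mem_coe.2 hc't) hcc'
      have hss'nadj : ¬ H.Adj s s' := hSind (Finset.mem_coe.2 hsS) (Finset.mem_coe.2 hs'S) hss'
      exact p4_free_aux hP4 hsc hadjcc' hs'c' hsc' hss'nadj (fun h' => hs'c h'.symm)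
    -- recurse on the complement of S
    set s' : Set W := (↑S : Set W)ᶜ with hs'def
    have hP4' : IndFree graphP4 (H.induce s') := hP4.of_embedding (SimpleGraph.Embedding.induce s')
    have hcl' : ∀ t : Finset ↥s', (H.induce s').IsClique (t : Set ↥s') → t.card ≤ k := by
      intro t ht
      have h1 : H.IsClique ((t.map (Function.Embedding.subtype _) : Finset W) : Set W) := by
        intro x hx y hy hxy
        simp only [Finset.coe_map, Set.mem_image, Finset.mem_coe,
          Function.Embedding.coe_subtype] at hx hy
        obtain ⟨p, hp, rfl⟩ := hx
        obtain ⟨q, hq, rfl⟩ := hy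
        have : (H.induce s').Adj p q := ht (Finset.mem_coe.2 hp) (Finset.mem_coe.2 hq)
          (fun h' => hxy (congrArg _ h'))
        simpa using this
      have h2 : ∀ x ∈ t.map (Function.Embedding.subtype _), x ∉ S := by
        intro x hx
        simp only [Finset.mem_map, Function.Embedding.coe_subtype] at hx
        obtain ⟨p, hp, rfl⟩ := hx
        have hps := p.2
        simp only [hs'def, Set.mem_compl_iff, Finset.mem_coe] at hps
        exact hps
      have := hsmall _ h1 h2
      simpa using this
    obtain ⟨c⟩ := ih (H.induce s') hP4' hcl'
    refine ⟨SimpleGraph.Coloring.mk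
      (fun v => if h' : v ∈ S then Fin.last k
        else (c ⟨v, by simp only [hs'def, Set.mem_compl_iff, Finset.mem_coe]; exact h'⟩).castSucc) ?_⟩
    intro v w hvw
    have hvw' : v ≠ w := H.ne_of_adj hvw
    by_cases hv : v ∈ S <;> by_cases hw : w ∈ S <;> simp only [hv, hw, dif_pos, dif_neg,
      not_false_iff]
    · exact absurd hvw (hSind (Finset.mem_coe.2 hv) (Finset.mem_coe.2 hw) hvw')
    · exact fun h' => (Fin.castSucc_lt_last _).ne' h'
    · exact fun h' => (Fin.castSucc_lt_last _).ne h'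
    · intro h'
      have hcadj : (H.induce s').Adj ⟨v, by simp only [hs'def, Set.mem_compl_iff, Finset.mem_coe]; exact hv⟩
          ⟨w, by simp only [hs'def, Set.mem_compl_iff, Finset.mem_coe]; exact hw⟩ := by simpa using hvw
      exact c.valid hcadj (Fin.castSucc_injective _ h')

lemma two_mul_card_ltPairs (n : ℕ) :
    2 * Fintype.card {p : Fin n × Fin n // p.1 < p.2} = n * n - n := by
  classical
  rw [Fintype.card_subtype]
  have hswap : (Finset.univ.filter fun p : Fin n × Fin n => p.1 < p.2).card
      = (Finset.univ.filter fun p : Fin n × Fin n => p.2 < p.1).card := by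
    apply Finset.card_bij (fun p _ => Prod.swap p)
    · intro p hp
      simp only [Finset.mem_filter, Finset.mem_univ, true_and] at hp ⊢
      exact hp
    · intro p _ q _ h
      exact Prod.swap_injective h
    · intro p hp
      refine ⟨Prod.swap p, ?_, by simp⟩
      simp only [Finset.mem_filter, Finset.mem_univ, true_and] at hp ⊢
      exact hp
  have hdisj : Disjoint (Finset.univ.filter fun p : Fin n × Fin n => p.1 < p.2)
      (Finset.univ.filter fun p : Fin n × Fin n => p.2 < p.1) := by
    rw [Finset.disjoint_left]
    intro p hp hq
    simp only [Finset.mem_filter, Finset.mem_univ, true_and] at hp hq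
    exact lt_asymm hp hq
  have hunion : (Finset.univ.filter fun p : Fin n × Fin n => p.1 < p.2)
      ∪ (Finset.univ.filter fun p : Fin n × Fin n => p.2 < p.1)
      = (Finset.univ : Finset (Fin n)).offDiag := by
    ext p
    simp only [Finset.mem_union, Finset.mem_filter, Finset.mem_univ, true_and,
      Finset.mem_offDiag]
    constructor
    · rintro (h | h)
      · exact h.ne
      · exact h.ne'
    · intro h
      rcases lt_or_gt_of_ne h with h' | h'
      · exact Or.inl h'
      · exact Or.inr h'
  have hcard := Finset.card_union_of_disjoint hdisj
  rw [hunion, Finset.offDiag_card, Finset.card_univ, Fintype.card_fin, ← hswap] at hcard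
  omega

/-- Lift a clique of an induced subgraph and bound its size by the clique number. -/
lemma induce_clique_card_le {V : Type*} [Fintype V] {G : SimpleGraph V} {s : Set V}
    (t : Finset ↥s) (ht : (G.induce s).IsClique (t : Set ↥s)) : t.card ≤ G.cliqueNum := by
  classical
  have h1 : G.IsClique ((t.map (Function.Embedding.subtype _) : Finset V) : Set V) := by
    intro x hx y hy hxy
    simp only [Finset.coe_map, Set.mem_image, Finset.mem_coe,
      Function.Embedding.coe_subtype] at hx hy
    obtain ⟨p, hp, rfl⟩ := hx
    obtain ⟨q, hq, rfl⟩ := hy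
    have : (G.induce s).Adj p q := ht (Finset.mem_coe.2 hp) (Finset.mem_coe.2 hq)
      (fun h' => hxy (congrArg _ h'))
    simpa using this
  have := SimpleGraph.IsClique.card_le_cliqueNum (tc := h1)
  simpa using this


/-- Every `(P₂ ∪ P₄)`-free graph `G` satisfies
`χ(G) ≤ (ω(G)³ − ω(G)² + 2ω(G))/2`. -/
theorem stmt15 {V : Type*} [Fintype V] (G : SimpleGraph V)
    (h1 : IndFree graphP2P4 G) :
    G.chromaticNumber ≤
      (((G.cliqueNum ^ 3 - G.cliqueNum ^ 2 + 2 * G.cliqueNum) / 2 : ℕ) : ℕ∞) := by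
  classical
  cases isEmpty_or_nonempty V with
  | inl hE =>
    rw [G.chromaticNumber_eq_zero_of_isEmpty]
    exact zero_le
  | inr hNE =>
  set n := G.cliqueNum with hn
  obtain ⟨K, hK⟩ := G.exists_isNClique_cliqueNum
  have hKcard : K.card = n := hK.card_eq
  have hKclique : G.IsClique (K : Set V) := hK.isClique
  have hclbound : ∀ t : Finset V, G.IsClique (t : Set V) → t.card ≤ n := fun t ht =>
    SimpleGraph.IsClique.card_le_cliqueNum (tc := ht)
  have hn1 : 1 ≤ n := by
    obtain ⟨v⟩ := hNE
    have := hclbound {v} (by simp [SimpleGraph.isClique_iff])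
    simpa using this
  let e : ↥K ≃ Fin n := Fintype.equivFinOfCardEq (by simp [hKcard])
  let k : Fin n → V := fun i => ↑(e.symm i)
  have hkmem : ∀ i, k i ∈ K := fun i => (e.symm i).2
  have hkinj : Function.Injective k := fun i j hij =>
    e.symm.injective (Subtype.coe_injective hij)
  have hksurj : ∀ w ∈ K, ∃ i, k i = w := fun w hw => ⟨e ⟨w, hw⟩, by simp [k]⟩
  let M : Fin n → Fin n → Set V := fun i j => {x | ¬ G.Adj x (k i) ∧ ¬ G.Adj x (k j)}
  let R : Fin n → Set V := fun i => {x | ¬ G.Adj x (k i) ∧ ∀ w ∈ K, w ≠ k i → G.Adj x w}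
  -- each M i j is P4-free
  have hMfree : ∀ i j : Fin n, i ≠ j → IndFree graphP4 (G.induce (M i j)) := by
    intro i j hij
    constructor
    intro f
    have huv : G.Adj (k i) (k j) :=
      hKclique (Finset.mem_coe.2 (hkmem i)) (Finset.mem_coe.2 (hkmem j))
        fun h' => hij (hkinj h')
    have hadj : ∀ p q : Fin 4, graphP4.Adj p q → G.Adj ↑(f p) ↑(f q) := by
      intro p q hpq
      have := f.map_rel_iff.2 hpq
      simpa using this
    have hnadj : ∀ p q : Fin 4, ¬ graphP4.Adj p q → ¬ G.Adj ↑(f p) ↑(f q) := by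
      intro p q hpq hadj'
      exact hpq (f.map_rel_iff.1 (by simpa using hadj'))
    have hmem : ∀ p : Fin 4, ¬ G.Adj ↑(f p) (k i) ∧ ¬ G.Adj ↑(f p) (k j) := fun p => (f p).2
    have g01 : graphP4.Adj 0 1 := by simp [graphP4, SimpleGraph.fromRel_adj]
    have g12 : graphP4.Adj 1 2 := by simp [graphP4, SimpleGraph.fromRel_adj]
    have g23 : graphP4.Adj 2 3 := by simp [graphP4, SimpleGraph.fromRel_adj]
    have ng02 : ¬ graphP4.Adj 0 2 := by simp [graphP4, SimpleGraph.fromRel_adj]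
    have ng03 : ¬ graphP4.Adj 0 3 := by simp [graphP4, SimpleGraph.fromRel_adj]
    have ng13 : ¬ graphP4.Adj 1 3 := by simp [graphP4, SimpleGraph.fromRel_adj]
    exact p2p4_free_aux h1 huv (hadj 0 1 g01) (hadj 1 2 g12) (hadj 2 3 g23)
      (hnadj 0 2 ng02) (hnadj 0 3 ng03) (hnadj 1 3 ng13)
      (fun h' => (hmem 0).1 h'.symm) (fun h' => (hmem 1).1 h'.symm)
      (fun h' => (hmem 2).1 h'.symm) (fun h' => (hmem 3).1 h'.symm)
      (fun h' => (hmem 0).2 h'.symm) (fun h' => (hmem 1).2 h'.symm)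
      (fun h' => (hmem 2).2 h'.symm) (fun h' => (hmem 3).2 h'.symm)
  -- colorings of the parts M i j
  have hMcol : ∀ i j : Fin n, i ≠ j → Nonempty ((G.induce (M i j)).Coloring (Fin n)) := by
    intro i j hij
    exact p4free_colorable n (G.induce (M i j)) (hMfree i j hij)
      fun t ht => induce_clique_card_le t ht
  let z : Fin n := ⟨0, hn1⟩
  let cF : Fin n → Fin n → V → Fin n := fun i j =>
    if h' : i ≠ j then
      (fun x => if hx : x ∈ M i j then (hMcol i j h').some ⟨x, hx⟩ else z)
    else fun _ => z
  have hcF : ∀ (i j : Fin n), i ≠ j → ∀ (x y : V), x ∈ M i j → y ∈ M i j →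
      G.Adj x y → cF i j x ≠ cF i j y := by
    intro i j hij x y hx hy hxy hcc
    simp only [cF, dif_pos hij, dif_pos hx, dif_pos hy] at hcc
    exact ((hMcol i j hij).some.valid (by simpa using hxy)) hcc
  -- each R i is independent
  have hRind : ∀ (i : Fin n) (x y : V), x ∈ R i → y ∈ R i → G.Adj x y → False := by
    intro i x y hx hy hxy
    have hx' : ¬ G.Adj x (k i) ∧ ∀ w ∈ K, w ≠ k i → G.Adj x w := hx
    have hy' : ¬ G.Adj y (k i) ∧ ∀ w ∈ K, w ≠ k i → G.Adj y w := hy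
    have hxw : ∀ w ∈ K.erase (k i), G.Adj x w := fun w hw =>
      hx'.2 w (Finset.mem_of_mem_erase hw) (Finset.ne_of_mem_erase hw)
    have hyw : ∀ w ∈ K.erase (k i), G.Adj y w := fun w hw =>
      hy'.2 w (Finset.mem_of_mem_erase hw) (Finset.ne_of_mem_erase hw)
    have hxK : x ∉ K.erase (k i) := fun h' => G.irrefl (hxw x h')
    have hyK : y ∉ K.erase (k i) := fun h' => G.irrefl (hyw y h')
    have hxy' : x ≠ y := G.ne_of_adj hxy
    have hclq : G.IsClique ((insert x (insert y (K.erase (k i))) : Finset V) : Set V) := by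
      rw [Finset.coe_insert, Finset.coe_insert]
      refine ((hKclique.subset ?_).insert ?_).insert ?_
      · intro w hw
        exact Finset.mem_coe.2 (Finset.mem_of_mem_erase (Finset.mem_coe.1 hw))
      · intro b hb hne
        exact hyw b (Finset.mem_coe.1 hb)
      · intro b hb hne
        rcases Set.mem_insert_iff.1 hb with rfl | hb'
        · exact hxy
        · exact hxw b (Finset.mem_coe.1 hb')
    have hcard := hclbound _ hclq
    rw [Finset.card_insert_of_notMem (by simp [hxy', hxK]),
      Finset.card_insert_of_notMem hyK,
      Finset.card_erase_of_mem (hkmem i), hKcard] at hcard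
    omega
  -- every vertex is covered
  have hcover : ∀ x : V, (∃ p : Fin n × Fin n, p.1 < p.2 ∧ x ∈ M p.1 p.2) ∨ ∃ i, x ∈ R i := by
    intro x
    set B := K.filter (fun w => ¬ G.Adj x w) with hB
    have hBne : B.Nonempty := by
      by_contra hemp
      have hall : ∀ w ∈ K, G.Adj x w := by
        intro w hw
        by_contra hnadj
        exact hemp ⟨w, Finset.mem_filter.2 ⟨hw, hnadj⟩⟩
      have hxK : x ∉ K := fun h' => G.irrefl (hall x h')
      have hclq : G.IsClique ((insert x K : Finset V) : Set V) := by
        rw [Finset.coe_insert]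
        exact hKclique.insert fun b hb _ => hall b (Finset.mem_coe.1 hb)
      have := hclbound _ hclq
      rw [Finset.card_insert_of_notMem hxK, hKcard] at this
      omega
    by_cases hc1 : 1 < B.card
    · obtain ⟨u, hu, v, hv, huv⟩ := Finset.one_lt_card.1 hc1
      have huK := (Finset.mem_filter.1 hu).1
      have hux := (Finset.mem_filter.1 hu).2
      have hvK := (Finset.mem_filter.1 hv).1
      have hvx := (Finset.mem_filter.1 hv).2
      obtain ⟨i, rfl⟩ := hksurj u huK
      obtain ⟨j, rfl⟩ := hksurj v hvK
      have hij : i ≠ j := fun h' => huv (by rw [h'])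
      rcases lt_or_gt_of_ne hij with h' | h'
      · exact Or.inl ⟨(i, j), h', ⟨hux, hvx⟩⟩
      · exact Or.inl ⟨(j, i), h', ⟨hvx, hux⟩⟩
    · obtain ⟨u, hu⟩ := hBne
      have hcard1 : ∀ w ∈ B, w = u := by
        intro w hw
        have hle : B.card ≤ 1 := by omega
        exact Finset.card_le_one.1 hle w hw u hu
      obtain ⟨i, rfl⟩ := hksurj u (Finset.mem_filter.1 hu).1
      refine Or.inr ⟨i, (Finset.mem_filter.1 hu).2, ?_⟩
      intro w hw hne
      by_contra hnadj
      exact hne (hcard1 w (Finset.mem_filter.2 ⟨hw, hnadj⟩))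
  -- choose a part for every vertex
  have hcov' : ∀ x : V, ∃ q : ({p : Fin n × Fin n // p.1 < p.2}) ⊕ Fin n,
      (∀ p, q = Sum.inl p → x ∈ M p.1.1 p.1.2) ∧ (∀ i, q = Sum.inr i → x ∈ R i) := by
    intro x
    rcases hcover x with ⟨p, hlt, hmem⟩ | ⟨i, hi⟩
    · refine ⟨Sum.inl ⟨p, hlt⟩, ?_, ?_⟩
      · intro q hq
        cases hq
        exact hmem
      · intro i hi'
        simp at hi'
    · refine ⟨Sum.inr i, ?_, ?_⟩
      · intro q hq
        simp at hq
      · intro j hj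
        cases hj
        exact hi
  let pt : V → ({p : Fin n × Fin n // p.1 < p.2}) ⊕ Fin n := fun x => (hcov' x).choose
  have hptl : ∀ x p, pt x = Sum.inl p → x ∈ M p.1.1 p.1.2 :=
    fun x p h' => (hcov' x).choose_spec.1 p h'
  have hptr : ∀ x i, pt x = Sum.inr i → x ∈ R i :=
    fun x i h' => (hcov' x).choose_spec.2 i h'
  -- the global coloring
  have hvalid : ∀ v w : V, G.Adj v w →
      Sum.elim (fun p : {p : Fin n × Fin n // p.1 < p.2} =>
          (Sum.inl (p, cF p.1.1 p.1.2 v) : ({p : Fin n × Fin n // p.1 < p.2} × Fin n) ⊕ Fin n))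
        (fun i => Sum.inr i) (pt v) ≠
      Sum.elim (fun p : {p : Fin n × Fin n // p.1 < p.2} =>
          (Sum.inl (p, cF p.1.1 p.1.2 w) : ({p : Fin n × Fin n // p.1 < p.2} × Fin n) ⊕ Fin n))
        (fun i => Sum.inr i) (pt w) := by
    intro v w hvw hcol
    rcases hv : pt v with p | i <;> rcases hw : pt w with q | j <;>
      rw [hv, hw] at hcol <;> simp only [Sum.elim_inl, Sum.elim_inr] at hcol
    · rw [Sum.inl.injEq, Prod.mk.injEq] at hcol
      obtain ⟨rfl, hc⟩ := hcol
      exact hcF p.1.1 p.1.2 (ne_of_lt p.2) v w (hptl v p hv) (hptl w p hw) hvw hc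
    · exact Sum.inl_ne_inr hcol
    · exact Sum.inr_ne_inl hcol
    · rw [Sum.inr.injEq] at hcol
      subst hcol
      exact hRind i v w (hptr v i hv) (hptr w i hw) hvw
  let C : G.Coloring (({p : Fin n × Fin n // p.1 < p.2} × Fin n) ⊕ Fin n) :=
    SimpleGraph.Coloring.mk _ fun {v w} hvw => hvalid v w hvw
  have hcolorable := C.colorable
  -- count the colors
  have h2 := two_mul_card_ltPairs n
  set P := Fintype.card {p : Fin n × Fin n // p.1 < p.2} with hP
  have hcardC : Fintype.card ((({p : Fin n × Fin n // p.1 < p.2}) × Fin n) ⊕ Fin n)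
      = P * n + n := by simp [hP]
  rw [hcardC] at hcolorable
  have harith : n ^ 3 - n ^ 2 + 2 * n = 2 * (P * n + n) := by
    have h3 : n ^ 3 = n * n * n := by ring
    have h4 : n ^ 2 = n * n := by ring
    calc n ^ 3 - n ^ 2 + 2 * n = n * n * n - n * n + 2 * n := by rw [h3, h4]
      _ = (n * n - n) * n + 2 * n := by rw [Nat.sub_mul]
      _ = 2 * P * n + 2 * n := by rw [h2]
      _ = 2 * (P * n + n) := by ring
  have hle : P * n + n ≤ (n ^ 3 - n ^ 2 + 2 * n) / 2 := by
    rw [harith, Nat.mul_div_cancel_left _ (by norm_num : 0 < 2)]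
  exact (hcolorable.mono hle).chromaticNumber_le
end
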